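/- arXiv:2109.09249 — 3 statements merged into one kernel-verified Lean document; each statement's English description precedes it below -/
import Mathlib

section
/- Let W be a finite multiset of positive reals with |W| ≥ 2, and let T ∈ 𝒯_W be a weighted tree whose underlying graph is not a star. Then T edge-transfers with respect to size to some weighted tree T' ∈ 𝒯_W not isomorphic to T. (That is, the unique minimal element of the poset (𝒯_W, ⪰_s) is the weighted star S_W.) -/
open scoped Classical

noncomputable section

/-- A weighted graph on vertex set `Fin n`: a simple graph together with a symmetric
weight function which is positive on edges and zero on non-edges. -/
structure WGraph (n : ℕ) where
  G : SimpleGraph (Fin n)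
  w : Fin n → Fin n → ℝ
  symm : ∀ u v, w u v = w v u
  pos : ∀ u v, G.Adj u v → 0 < w u v
  zero : ∀ u v, ¬ G.Adj u v → w u v = 0

namespace WGraph

variable {n : ℕ}

/-- The weighted degree `d_G(u) = Σ_v ω(uv)`. -/
def deg (T : WGraph n) (u : Fin n) : ℝ := ∑ v, T.w u v

/-- The volume of the whole graph: sum of all weighted degrees. -/
def vol (T : WGraph n) : ℝ := ∑ u, T.deg u

/-- The combinatorial Laplacian `L = D - A`. -/
def lap (T : WGraph n) : Matrix (Fin n) (Fin n) ℝ :=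
  Matrix.of fun u v => (if u = v then T.deg u else 0) - T.w u v

/-- The normalized Laplacian `𝓛 = D^{-1/2} L D^{-1/2}`. -/
def nlap (T : WGraph n) : Matrix (Fin n) (Fin n) ℝ :=
  Matrix.of fun u v => T.lap u v / (Real.sqrt (T.deg u) * Real.sqrt (T.deg v))

/-- The weight of an (unordered) edge. -/
def ew (T : WGraph n) : Sym2 (Fin n) → ℝ := Sym2.lift ⟨T.w, T.symm⟩

/-- `ω(H)`: the product of the weights of all edges of a (spanning) subgraph `H`. -/
def wOf (T : WGraph n) (H : SimpleGraph (Fin n)) : ℝ := ∏ᶠ e ∈ H.edgeSet, T.ew e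

/-- `τ(G)`: the sum of `ω(H)` over all spanning trees `H` of `G`. -/
def tau (T : WGraph n) : ℝ :=
  ∑ᶠ H ∈ {H : SimpleGraph (Fin n) | H ≤ T.G ∧ H.IsTree}, T.wOf H

/-- The multiset of edge-weights of a weighted graph. -/
def edgeWeights (T : WGraph n) : Multiset ℝ := T.G.edgeFinset.val.map T.ew

end WGraph

/-- The sum of the reciprocals of the nonzero eigenvalues of a hermitian real matrix
(in `ℝ`, `0⁻¹ = 0`, so the zero eigenvalues contribute nothing to the sum). -/
def sumInvEig {n : ℕ} (M : Matrix (Fin n) (Fin n) ℝ) : ℝ :=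
  if h : M.IsHermitian then ∑ i, (h.eigenvalues i)⁻¹ else 0

/-- `H` is a spanning 2-forest of `G`: an acyclic subgraph of `G` on the full
vertex set with exactly two connected components. -/
def IsTwoForestOf {n : ℕ} (G H : SimpleGraph (Fin n)) : Prop :=
  H ≤ G ∧ H.IsAcyclic ∧ Nat.card H.ConnectedComponent = 2

/-- `S(F)`: the product of the numbers of vertices of the components of `F`. -/
def SVal {n : ℕ} (F : SimpleGraph (Fin n)) : ℝ :=
  ∏ᶠ c : F.ConnectedComponent, (Nat.card c.supp : ℝ)

/-- `V_T(F)`: the product over the components of `F` of their volumes in `T`,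
i.e. of the sums of `T`-degrees of their vertices. -/
def VVal {n : ℕ} (T : WGraph n) (F : SimpleGraph (Fin n)) : ℝ :=
  ∏ᶠ c : F.ConnectedComponent, ∑ᶠ u ∈ c.supp, T.deg u

/-- The number of vertices of the connected component of `v` in `H`. -/
def compSize {n : ℕ} (H : SimpleGraph (Fin n)) (v : Fin n) : ℕ :=
  Nat.card ((H.connectedComponentMk v).supp)

/-- The volume of the connected component of `v` in `H`, computed intrinsically
(with the weights of `T`): the sum over vertices `u` of the component of the sum of
weights of edges of the component at `u`. -/
def compVol {n : ℕ} (T : WGraph n) (H : SimpleGraph (Fin n)) (v : Fin n) : ℝ :=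
  ∑ᶠ u ∈ (H.connectedComponentMk v).supp, ∑ᶠ x ∈ (H.connectedComponentMk v).supp, T.w u x

/-- The common part of the two edge-transfer operations: `T'` is obtained from `T` by
deleting the edge `e₂ = v₂v₃` and adding the edge `v₁v₃` carrying the weight of `e₂`,
where `e₁ = v₁v₂` and `e₂ = v₂v₃` are adjacent edges of `T`. -/
def EdgeTransferAux {n : ℕ} (T T' : WGraph n) (v1 v2 v3 : Fin n) : Prop :=
  T.G.Adj v1 v2 ∧ T.G.Adj v2 v3 ∧ v1 ≠ v3 ∧
  T'.G = T.G.deleteEdges {s(v2, v3)} ⊔ SimpleGraph.fromEdgeSet {s(v1, v3)} ∧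
  T'.w v1 v3 = T.w v2 v3 ∧
  (∀ u v : Fin n, s(u, v) ≠ s(v1, v3) → s(u, v) ≠ s(v2, v3) → T'.w u v = T.w u v)

/-- `T` edge-transfers to `T'` with respect to size (via `v₁, v₂, v₃`):
the component `T₁` of `T ∖ {e₁, e₂}` containing `v₁` has more vertices than the
component `T₂` containing `v₂`. -/
def EdgeTransferSize {n : ℕ} (T T' : WGraph n) (v1 v2 v3 : Fin n) : Prop :=
  EdgeTransferAux T T' v1 v2 v3 ∧
  compSize (T.G.deleteEdges {s(v1, v2), s(v2, v3)}) v2 <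
    compSize (T.G.deleteEdges {s(v1, v2), s(v2, v3)}) v1

/-- `T` edge-transfers to `T'` with respect to volume (via `v₁, v₂, v₃`):
the component `T₁` of `T ∖ {e₁, e₂}` containing `v₁` has larger intrinsic volume than
the component `T₂` containing `v₂`. -/
def EdgeTransferVol {n : ℕ} (T T' : WGraph n) (v1 v2 v3 : Fin n) : Prop :=
  EdgeTransferAux T T' v1 v2 v3 ∧
  compVol T (T.G.deleteEdges {s(v1, v2), s(v2, v3)}) v2 <
    compVol T (T.G.deleteEdges {s(v1, v2), s(v2, v3)}) v1

/-- Isomorphism of weighted graphs: a graph isomorphism preserving the weights. -/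
def WIso {n : ℕ} (T T' : WGraph n) : Prop :=
  ∃ f : T.G ≃g T'.G, ∀ u v, T'.w (f u) (f v) = T.w u v

/-- The star graph on `Fin n`, centered at the vertex `0`. -/
def starGraph (n : ℕ) : SimpleGraph (Fin n) :=
  SimpleGraph.fromRel fun u _ => u.val = 0

/-- `T` is a polarized weighted path: its underlying graph is a path
`v₁ v₂ … v_n` and, writing `e_i = v_i v_{i+1}` and `c(e_i) = min {i, n - i}`,
one has `ω(e_i) ≥ ω(e_j)` whenever `c(e_i) ≤ c(e_j)`. -/
def IsPolarizedPath {n : ℕ} (T : WGraph n) : Prop :=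
  ∃ f : SimpleGraph.pathGraph n ≃g T.G,
    ∀ (i j : ℕ) (hi : i + 1 < n) (hj : j + 1 < n),
      min (i + 1) (n - 1 - i) ≤ min (j + 1) (n - 1 - j) →
      T.w (f ⟨j, by omega⟩) (f ⟨j + 1, hj⟩) ≤ T.w (f ⟨i, by omega⟩) (f ⟨i + 1, hi⟩)

/-- Unweighted: adjacency indicator. -/
def adjW {n : ℕ} (G : SimpleGraph (Fin n)) (u v : Fin n) : ℝ := if G.Adj u v then 1 else 0

/-- Unweighted degree. -/
def degG {n : ℕ} (G : SimpleGraph (Fin n)) (u : Fin n) : ℝ := ∑ v, adjW G u v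

/-- The combinatorial Laplacian `L = D - A` of a simple graph. -/
def lapG {n : ℕ} (G : SimpleGraph (Fin n)) : Matrix (Fin n) (Fin n) ℝ :=
  Matrix.of fun u v => (if u = v then degG G u else 0) - adjW G u v

/-- The normalized Laplacian `𝓛 = D^{-1/2} L D^{-1/2}` of a simple graph. -/
def nlapG {n : ℕ} (G : SimpleGraph (Fin n)) : Matrix (Fin n) (Fin n) ℝ :=
  Matrix.of fun u v => lapG G u v / (Real.sqrt (degG G u) * Real.sqrt (degG G v))


namespace Stmt13Helpers

open SimpleGraph

lemma reach_sup_edge {V : Type*} {G : SimpleGraph V} {a b : V} (hab : a ≠ b) (x y : V) :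
    (G ⊔ fromEdgeSet {s(a, b)}).Reachable x y ↔
      G.Reachable x y ∨ (G.Reachable x a ∧ G.Reachable b y) ∨
        (G.Reachable x b ∧ G.Reachable a y) := by
  constructor
  · intro h
    obtain ⟨w⟩ := h
    induction w with
    | nil => exact Or.inl (Reachable.refl _)
    | @cons u v' y' h p ih =>
      rcases (sup_adj _ _ _ _).mp h with hG | hE
      · have hr : G.Reachable u v' := hG.reachable
        rcases ih with h1 | ⟨h1, h2⟩ | ⟨h1, h2⟩
        · exact Or.inl (hr.trans h1)
        · exact Or.inr (Or.inl ⟨hr.trans h1, h2⟩)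
        · exact Or.inr (Or.inr ⟨hr.trans h1, h2⟩)
      · obtain ⟨hm, hne⟩ := (fromEdgeSet_adj _).mp hE
        rcases Sym2.eq_iff.mp (Set.mem_singleton_iff.mp hm) with ⟨rfl, rfl⟩ | ⟨rfl, rfl⟩
        · rcases ih with h1 | ⟨h1, h2⟩ | ⟨h1, h2⟩
          · exact Or.inr (Or.inl ⟨Reachable.refl _, h1⟩)
          · exact Or.inr (Or.inl ⟨Reachable.refl _, h2⟩)
          · exact Or.inl h2
        · rcases ih with h1 | ⟨h1, h2⟩ | ⟨h1, h2⟩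
          · exact Or.inr (Or.inr ⟨Reachable.refl _, h1⟩)
          · exact Or.inl h2
          · exact Or.inr (Or.inr ⟨Reachable.refl _, h2⟩)
  · have hadj : (G ⊔ fromEdgeSet {s(a, b)}).Adj a b :=
      (sup_adj _ _ _ _).mpr (Or.inr ((fromEdgeSet_adj _).mpr ⟨rfl, hab⟩))
    rintro (h | ⟨h1, h2⟩ | ⟨h1, h2⟩)
    · exact h.mono le_sup_left
    · exact ((h1.mono le_sup_left).trans hadj.reachable).trans (h2.mono le_sup_left)
    · exact ((h1.mono le_sup_left).trans hadj.symm.reachable).trans (h2.mono le_sup_left)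

lemma reach_iff_of_reach {V : Type*} {K : SimpleGraph V} {a b c : V} (hab : a ≠ b) (hcb : c ≠ b)
    (hac : K.Reachable a c) (x y : V) :
    (K ⊔ fromEdgeSet {s(a, b)}).Reachable x y ↔ (K ⊔ fromEdgeSet {s(c, b)}).Reachable x y := by
  rw [reach_sup_edge hab, reach_sup_edge hcb]
  constructor
  · rintro (h | ⟨h1, h2⟩ | ⟨h1, h2⟩)
    · exact Or.inl h
    · exact Or.inr (Or.inl ⟨h1.trans hac, h2⟩)
    · exact Or.inr (Or.inr ⟨h1, hac.symm.trans h2⟩)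
  · rintro (h | ⟨h1, h2⟩ | ⟨h1, h2⟩)
    · exact Or.inl h
    · exact Or.inr (Or.inl ⟨h1.trans hac.symm, h2⟩)
    · exact Or.inr (Or.inr ⟨h1, hac.trans h2⟩)

lemma mem_supp_iff' {V : Type*} {H : SimpleGraph V} {v y : V} :
    y ∈ (H.connectedComponentMk v).supp ↔ H.Reachable v y := by
  rw [ConnectedComponent.mem_supp_iff, ConnectedComponent.eq, reachable_comm]

lemma compSize_eq_of_reach_iff {n : ℕ} {A B : SimpleGraph (Fin n)} {v : Fin n}
    (h : ∀ y, A.Reachable v y ↔ B.Reachable v y) : compSize A v = compSize B v := by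
  have hs : (A.connectedComponentMk v).supp = (B.connectedComponentMk v).supp := by
    ext y; rw [mem_supp_iff', mem_supp_iff', h]
  unfold compSize
  rw [hs]

lemma compSize_congr_reach {n : ℕ} {H : SimpleGraph (Fin n)} {u v : Fin n}
    (h : H.Reachable u v) : compSize H u = compSize H v := by
  unfold compSize
  rw [ConnectedComponent.sound h]

lemma compSize_eq_ncard {n : ℕ} (H : SimpleGraph (Fin n)) (v : Fin n) :
    compSize H v = ((H.connectedComponentMk v).supp).ncard := by
  rw [compSize, Nat.card_coe_set_eq]

lemma del_sup {V : Type*} (G : SimpleGraph V) {p q : V} (h : G.Adj p q) (s : Set (Sym2 V))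
    (hs : s(p, q) ∉ s) :
    G.deleteEdges s = G.deleteEdges (insert s(p, q) s) ⊔ fromEdgeSet {s(p, q)} := by
  ext x y
  simp only [deleteEdges_adj, sup_adj, fromEdgeSet_adj, Set.mem_insert_iff,
    Set.mem_singleton_iff]
  constructor
  · rintro ⟨ha, hm⟩
    by_cases hc : s(x, y) = s(p, q)
    · exact Or.inr ⟨hc, ha.ne⟩
    · exact Or.inl ⟨ha, by tauto⟩
  · rintro (⟨ha, hm⟩ | ⟨hc, hne⟩)
    · exact ⟨ha, by tauto⟩
    · rcases Sym2.eq_iff.mp hc with ⟨rfl, rfl⟩ | ⟨rfl, rfl⟩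
      · exact ⟨h, hc ▸ hs⟩
      · exact ⟨h.symm, hc ▸ hs⟩

lemma not_adj_of_tree {V : Type*} {G : SimpleGraph V} (hT : G.IsTree) {v1 v2 v3 : V}
    (h12 : G.Adj v1 v2) (h23 : G.Adj v2 v3) (h13 : v1 ≠ v3) : ¬G.Adj v1 v3 := by
  intro h
  have hp2 : (Walk.cons h12 (Walk.cons h23 Walk.nil)).IsPath := by
    simp [Walk.isPath_def, h12.ne, h23.ne, h13]
  have hu := hT.IsAcyclic.path_unique (Path.singleton h) ⟨_, hp2⟩
  have := congrArg (fun q : G.Path v1 v3 => q.1.length) hu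
  simp [Path.singleton] at this

lemma adj_of_leafy {V : Type*} {G : SimpleGraph V} {c x : V}
    (hleaf : ∀ y, G.Adj c y → ∀ z, G.Adj y z → z = c) (w : G.Walk c x) (hw : w.IsPath)
    (hx : x ≠ c) : G.Adj c x :=
  match w, hw, hx with
  | Walk.nil, _, hx => absurd rfl hx
  | Walk.cons h Walk.nil, _, _ => h
  | @Walk.cons _ _ _ b _ h (@Walk.cons _ _ _ z _ h2 r), hw, _ => by
      have hzc := hleaf _ h _ h2
      have hcr : c ∈ r.support := hzc ▸ r.start_mem_support
      have hnd := hw.support_nodup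
      rw [Walk.support_cons, Walk.support_cons] at hnd
      exact absurd h (by exact absurd (List.mem_cons_of_mem _ hcr) (List.nodup_cons.mp hnd).1)

lemma sym2_map_eq_iff {V W : Type*} {f : V → W} (hf : Function.Injective f) {x y u v : V} :
    s(f x, f y) = s(f u, f v) ↔ s(x, y) = s(u, v) := by
  simp [Sym2.eq_iff, hf.eq_iff]

def isoDel {n : ℕ} {A B : SimpleGraph (Fin n)} (φ : A ≃g B) (u v : Fin n) :
    (A.deleteEdges {s(u, v)}) ≃g (B.deleteEdges {s(φ u, φ v)}) := by
  refine ⟨φ.toEquiv, ?_⟩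
  intro x y
  simp only [Equiv.coe_fn_mk, deleteEdges_adj, Set.mem_singleton_iff]
  constructor
  · rintro ⟨ha, hm⟩
    exact ⟨φ.map_adj_iff.mp ha, fun hc => hm ((sym2_map_eq_iff φ.toEquiv.injective).mpr hc)⟩
  · rintro ⟨ha, hm⟩
    exact ⟨φ.map_adj_iff.mpr ha, fun hc => hm ((sym2_map_eq_iff φ.toEquiv.injective).mp hc)⟩

lemma compSize_iso {n : ℕ} {A B : SimpleGraph (Fin n)} (φ : A ≃g B) (v : Fin n) :
    compSize B (φ v) = compSize A v := by
  unfold compSize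
  refine (Nat.card_congr (Equiv.subtypeEquiv φ.toEquiv fun y => ?_)).symm
  rw [mem_supp_iff', mem_supp_iff']
  exact (Iso.reachable_iff (φ := φ)).symm

noncomputable def Fval {n : ℕ} (G : SimpleGraph (Fin n)) (u v : Fin n) : ℝ :=
  if G.Adj u v then
    (compSize (G.deleteEdges {s(u, v)}) u : ℝ) * compSize (G.deleteEdges {s(u, v)}) v else 0

noncomputable def Jval {n : ℕ} (G : SimpleGraph (Fin n)) : ℝ := ∑ u, ∑ v, Fval G u v

lemma Fval_symm {n : ℕ} (G : SimpleGraph (Fin n)) (u v : Fin n) : Fval G u v = Fval G v u := by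
  unfold Fval
  rw [show s(v, u) = s(u, v) from Sym2.eq_swap]
  by_cases h : G.Adj u v
  · rw [if_pos h, if_pos h.symm, mul_comm]
  · rw [if_neg h, if_neg fun hc => h hc.symm]

lemma Fval_iso {n : ℕ} {A B : SimpleGraph (Fin n)} (φ : A ≃g B) (u v : Fin n) :
    Fval B (φ u) (φ v) = Fval A u v := by
  unfold Fval
  by_cases h : A.Adj u v
  · have h1 : compSize (B.deleteEdges {s(φ u, φ v)}) (φ u)
        = compSize (A.deleteEdges {s(u, v)}) u := compSize_iso (isoDel φ u v) u
    have h2 : compSize (B.deleteEdges {s(φ u, φ v)}) (φ v)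
        = compSize (A.deleteEdges {s(u, v)}) v := compSize_iso (isoDel φ u v) v
    rw [if_pos (φ.map_adj_iff.mpr h), if_pos h, h1, h2]
  · rw [if_neg (fun hc => h (φ.map_adj_iff.mp hc)), if_neg h]

lemma Jval_iso {n : ℕ} {A B : SimpleGraph (Fin n)} (φ : A ≃g B) : Jval A = Jval B := by
  unfold Jval
  calc ∑ u, ∑ v, Fval A u v = ∑ u, ∑ v, Fval B (φ u) (φ v) := by
        refine Finset.sum_congr rfl fun u _ => Finset.sum_congr rfl fun v _ => ?_
        rw [Fval_iso]
    _ = ∑ u, ∑ v, Fval B (φ u) v := by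
        refine Finset.sum_congr rfl fun u _ => Equiv.sum_comp φ.toEquiv _
    _ = ∑ u, ∑ v, Fval B u v := Equiv.sum_comp φ.toEquiv (fun u => ∑ v, Fval B u v)

end Stmt13Helpers

namespace Stmt13Helpers

open SimpleGraph

lemma aux_main {n : ℕ} (T : WGraph n) (hT : T.G.IsTree) {v1 v2 v3 : Fin n}
    (h12 : T.G.Adj v1 v2) (h23 : T.G.Adj v2 v3) (h13 : v1 ≠ v3)
    (horder : compSize (T.G.deleteEdges {s(v1, v2)}) v2
      ≤ compSize (T.G.deleteEdges {s(v1, v2)}) v1) :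
    ∃ T' : WGraph n, T'.G.IsTree ∧ T'.edgeWeights = T.edgeWeights ∧ ¬ WIso T T' ∧
      EdgeTransferSize T T' v1 v2 v3 := by
  have hne12 : v1 ≠ v2 := h12.ne
  have hne23 : v2 ≠ v3 := h23.ne
  have hE12 : s(v1, v2) ≠ s(v2, v3) := by
    intro hc
    rcases Sym2.eq_iff.mp hc with ⟨h, _⟩ | ⟨h, _⟩
    · exact hne12 h
    · exact h13 h
  have hE2' : s(v1, v3) ≠ s(v2, v3) := by
    intro hc
    rcases Sym2.eq_iff.mp hc with ⟨h, _⟩ | ⟨h, _⟩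
    · exact hne12 h
    · exact h13 h
  have hE1' : s(v1, v3) ≠ s(v1, v2) := by
    intro hc
    rcases Sym2.eq_iff.mp hc with ⟨_, h⟩ | ⟨_, h⟩
    · exact hne23 h.symm
    · exact h13 h.symm
  have hna13 : ¬T.G.Adj v1 v3 := not_adj_of_tree hT h12 h23 h13
  have hbridge : ∀ {x y : Fin n}, T.G.Adj x y → ¬(T.G.deleteEdges {s(x, y)}).Reachable x y := by
    intro x y hxy
    have hb := (isAcyclic_iff_forall_adj_isBridge.mp hT.IsAcyclic) hxy
    exact isBridge_iff.mp hb
  -- decompositions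
  have d0 : T.G = T.G.deleteEdges {s(v1, v2)} ⊔ fromEdgeSet {s(v1, v2)} := by
    simpa using del_sup T.G h12 ∅ (Set.notMem_empty _)
  have d0' : T.G = T.G.deleteEdges {s(v2, v3)} ⊔ fromEdgeSet {s(v2, v3)} := by
    simpa using del_sup T.G h23 ∅ (Set.notMem_empty _)
  have d1 : T.G.deleteEdges {s(v1, v2)}
      = T.G.deleteEdges {s(v1, v2), s(v2, v3)} ⊔ fromEdgeSet {s(v2, v3)} := by
    have h := del_sup T.G h23 {s(v1, v2)} (by simpa using hE12.symm)
    rwa [show (insert s(v2, v3) {s(v1, v2)} : Set (Sym2 (Fin n)))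
      = {s(v1, v2), s(v2, v3)} from Set.pair_comm _ _] at h
  have dB : ∀ e : Sym2 (Fin n), e ≠ s(v1, v3) →
      (T.G.deleteEdges {s(v2, v3)} ⊔ fromEdgeSet {s(v1, v3)}).deleteEdges {e}
        = T.G.deleteEdges {e, s(v2, v3)} ⊔ fromEdgeSet {s(v1, v3)} := by
    intro e he
    ext x y
    simp only [deleteEdges_adj, sup_adj, fromEdgeSet_adj, Set.mem_singleton_iff,
      Set.mem_insert_iff]
    by_cases hc : s(x, y) = s(v1, v3)
    · have hnadj : ¬T.G.Adj x y := by
        rcases Sym2.eq_iff.mp hc with ⟨rfl, rfl⟩ | ⟨rfl, rfl⟩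
        · exact hna13
        · exact fun h => hna13 h.symm
      have hee : s(x, y) ≠ e := by rw [hc]; exact Ne.symm he
      simp only [hc, hnadj, hee, false_and, false_or, and_false, or_false]
      tauto
    · simp only [hc, false_and, or_false]
      tauto
  have dC : (T.G.deleteEdges {s(v2, v3)} ⊔ fromEdgeSet {s(v1, v3)}).deleteEdges {s(v1, v3)}
      = T.G.deleteEdges {s(v2, v3)} := by
    ext x y
    simp only [deleteEdges_adj, sup_adj, fromEdgeSet_adj, Set.mem_singleton_iff]
    by_cases hc : s(x, y) = s(v1, v3)
    · have hnadj : ¬T.G.Adj x y := by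
        rcases Sym2.eq_iff.mp hc with ⟨rfl, rfl⟩ | ⟨rfl, rfl⟩
        · exact hna13
        · exact fun h => hna13 h.symm
      simp [hc, hnadj]
    · simp only [hc, false_and, or_false]
      tauto
  -- reachability facts
  have hbr1 : ¬(T.G.deleteEdges {s(v1, v2)}).Reachable v1 v2 := hbridge h12
  have hbr2 : ¬(T.G.deleteEdges {s(v2, v3)}).Reachable v2 v3 := hbridge h23
  have hle1 : T.G.deleteEdges {s(v1, v2), s(v2, v3)} ≤ T.G.deleteEdges {s(v1, v2)} :=
    deleteEdges_anti (by simp)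
  have hle2 : T.G.deleteEdges {s(v1, v2), s(v2, v3)} ≤ T.G.deleteEdges {s(v2, v3)} :=
    deleteEdges_anti (by simp)
  have hR12 : ¬(T.G.deleteEdges {s(v1, v2), s(v2, v3)}).Reachable v1 v2 :=
    fun h => hbr1 (h.mono hle1)
  have hR23 : ¬(T.G.deleteEdges {s(v1, v2), s(v2, v3)}).Reachable v2 v3 :=
    fun h => hbr2 (h.mono hle2)
  have hadj23' : (T.G.deleteEdges {s(v1, v2)}).Adj v2 v3 :=
    deleteEdges_adj.mpr ⟨h23, by simpa using hE12.symm⟩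
  have hadj12H2 : (T.G.deleteEdges {s(v2, v3)}).Adj v1 v2 :=
    deleteEdges_adj.mpr ⟨h12, by simpa using hE12⟩
  have hR13 : ¬(T.G.deleteEdges {s(v1, v2), s(v2, v3)}).Reachable v1 v3 := by
    intro h
    exact hbr1 ((h.mono hle1).trans hadj23'.symm.reachable)
  have hH2R13 : ¬(T.G.deleteEdges {s(v2, v3)}).Reachable v1 v3 := by
    intro h
    exact hbr2 (hadj12H2.symm.reachable.trans h)
  have hreach_del1 : ∀ y, (T.G.deleteEdges {s(v1, v2)}).Reachable v1 y ↔
      (T.G.deleteEdges {s(v1, v2), s(v2, v3)}).Reachable v1 y := by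
    intro y
    rw [d1, reach_sup_edge hne23]
    constructor
    · rintro (h | ⟨h1, h2⟩ | ⟨h1, h2⟩)
      · exact h
      · exact absurd h1 hR12
      · exact absurd h1 hR13
    · exact Or.inl
  have hreach_del1_v2 : ∀ y, (T.G.deleteEdges {s(v1, v2)}).Reachable v2 y ↔
      ((T.G.deleteEdges {s(v1, v2), s(v2, v3)}).Reachable v2 y ∨
        (T.G.deleteEdges {s(v1, v2), s(v2, v3)}).Reachable v3 y) := by
    intro y
    rw [d1, reach_sup_edge hne23]
    constructor
    · rintro (h | ⟨h1, h2⟩ | ⟨h1, h2⟩)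
      · exact Or.inl h
      · exact Or.inr h2
      · exact absurd h1 hR23
    · rintro (h | h)
      · exact Or.inl h
      · exact Or.inr (Or.inl ⟨Reachable.refl _, h⟩)
  -- partition and sizes
  have hdisj : ∀ {p q : Fin n}, ¬(T.G.deleteEdges {s(v1, v2), s(v2, v3)}).Reachable p q →
      Disjoint ((T.G.deleteEdges {s(v1, v2), s(v2, v3)}).connectedComponentMk p).supp
        ((T.G.deleteEdges {s(v1, v2), s(v2, v3)}).connectedComponentMk q).supp := by
    intro p q hpq
    rw [Set.disjoint_left]
    intro y hy1 hy2
    rw [mem_supp_iff'] at hy1 hy2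
    exact hpq (hy1.trans hy2.symm)
  have hcs_del1_v1 : compSize (T.G.deleteEdges {s(v1, v2)}) v1
      = compSize (T.G.deleteEdges {s(v1, v2), s(v2, v3)}) v1 :=
    compSize_eq_of_reach_iff hreach_del1
  have hcs_del1_v2 : compSize (T.G.deleteEdges {s(v1, v2)}) v2
      = compSize (T.G.deleteEdges {s(v1, v2), s(v2, v3)}) v2
        + compSize (T.G.deleteEdges {s(v1, v2), s(v2, v3)}) v3 := by
    rw [compSize_eq_ncard, compSize_eq_ncard, compSize_eq_ncard]
    have hsupp : ((T.G.deleteEdges {s(v1, v2)}).connectedComponentMk v2).supp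
        = ((T.G.deleteEdges {s(v1, v2), s(v2, v3)}).connectedComponentMk v2).supp
          ∪ ((T.G.deleteEdges {s(v1, v2), s(v2, v3)}).connectedComponentMk v3).supp := by
      ext y
      simp only [Set.mem_union, mem_supp_iff']
      exact hreach_del1_v2 y
    rw [hsupp, Set.ncard_union_eq (hdisj hR23) (Set.toFinite _) (Set.toFinite _)]
  have ha3pos : 0 < compSize (T.G.deleteEdges {s(v1, v2), s(v2, v3)}) v3 := by
    rw [compSize]
    have : Nonempty (((T.G.deleteEdges {s(v1, v2), s(v2, v3)}).connectedComponentMk v3).supp) :=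
      ⟨⟨v3, mem_supp_iff'.mpr (Reachable.refl _)⟩⟩
    exact Nat.card_pos
  have ha12 : compSize (T.G.deleteEdges {s(v1, v2), s(v2, v3)}) v2
      < compSize (T.G.deleteEdges {s(v1, v2), s(v2, v3)}) v1 := by
    rw [hcs_del1_v2, hcs_del1_v1] at horder
    omega
  -- weights transfer lemma
  have hweights : ∀ T' : WGraph n,
      T'.G = T.G.deleteEdges {s(v2, v3)} ⊔ fromEdgeSet {s(v1, v3)} →
      T'.w v1 v3 = T.w v2 v3 →
      (∀ u v : Fin n, s(u, v) ≠ s(v1, v3) → s(u, v) ≠ s(v2, v3) → T'.w u v = T.w u v) →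
      T'.edgeWeights = T.edgeWeights := by
    intro T' hTG hwe hwo
    have hES : (T.G.deleteEdges {s(v2, v3)} ⊔ fromEdgeSet {s(v1, v3)}).edgeSet
        = insert (s(v1, v3)) (T.G.edgeSet \ {s(v2, v3)}) := by
      rw [edgeSet_sup, edgeSet_deleteEdges, edgeSet_fromEdgeSet]
      have hdiag : ({s(v1, v3)} : Set (Sym2 (Fin n))) \ Sym2.diagSet = {s(v1, v3)} := by
        ext e
        simp only [Set.mem_diff, Set.mem_singleton_iff, Sym2.mem_diagSet]
        constructor
        · rintro ⟨h, _⟩; exact h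
        · rintro rfl
          exact ⟨rfl, by simp [Sym2.mk_isDiag_iff, h13]⟩
      rw [hdiag, Set.insert_eq, Set.union_comm]
    have hEF : T'.G.edgeFinset = insert (s(v1, v3)) (T.G.edgeFinset.erase (s(v2, v3))) := by
      ext e
      rw [mem_edgeFinset, hTG, hES]
      simp only [Set.mem_insert_iff, Set.mem_diff, Set.mem_singleton_iff, Finset.mem_insert,
        Finset.mem_erase, mem_edgeFinset]
      tauto
    have hnotmem : s(v1, v3) ∉ T.G.edgeFinset.erase (s(v2, v3)) := by
      intro h
      exact hna13 ((mem_edgeSet _).mp (mem_edgeFinset.mp (Finset.mem_of_mem_erase h)))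
    have he2mem : s(v2, v3) ∈ T.G.edgeFinset.val :=
      Finset.mem_def.mp (mem_edgeFinset.mpr ((mem_edgeSet _).mpr h23))
    have hewgen : ∀ e : Sym2 (Fin n), e ≠ s(v1, v3) → e ≠ s(v2, v3) → T'.ew e = T.ew e := by
      intro e
      induction e using Sym2.ind with
      | _ x y =>
        intro h1 h2
        show T'.ew s(x, y) = T.ew s(x, y)
        simp only [WGraph.ew, Sym2.lift_mk]
        exact hwo x y h1 h2
    calc T'.edgeWeights
        = (insert (s(v1, v3)) (T.G.edgeFinset.erase (s(v2, v3)))).val.map T'.ew := by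
          rw [WGraph.edgeWeights, hEF]
      _ = (s(v1, v3) ::ₘ (T.G.edgeFinset.val.erase (s(v2, v3)))).map T'.ew := by
          rw [Finset.insert_val_of_notMem hnotmem, Finset.erase_val]
      _ = T.w v2 v3 ::ₘ (T.G.edgeFinset.val.erase (s(v2, v3))).map T.ew := by
          have hhead : T'.ew s(v1, v3) = T.w v2 v3 := by
            simp only [WGraph.ew, Sym2.lift_mk]
            exact hwe
          have hrest : (T.G.edgeFinset.val.erase (s(v2, v3))).map T'.ew
              = (T.G.edgeFinset.val.erase (s(v2, v3))).map T.ew := by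
            refine Multiset.map_congr rfl fun e he => ?_
            have hmem := Multiset.mem_of_mem_erase he
            have hnee2 : e ≠ s(v2, v3) := by
              intro hc; subst hc
              exact (T.G.edgeFinset.nodup.not_mem_erase) he
            have hnee' : e ≠ s(v1, v3) := by
              intro hc; subst hc
              exact hna13 ((mem_edgeSet _).mp (mem_edgeFinset.mp (Finset.mem_def.mpr hmem)))
            exact hewgen e hnee' hnee2
          rw [Multiset.map_cons, hhead, hrest]
      _ = (s(v2, v3) ::ₘ T.G.edgeFinset.val.erase (s(v2, v3))).map T.ew := by
          have hhead : T.ew s(v2, v3) = T.w v2 v3 := by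
            simp only [WGraph.ew, Sym2.lift_mk]
          rw [Multiset.map_cons, hhead]
      _ = T.edgeWeights := by rw [Multiset.cons_erase he2mem, WGraph.edgeWeights]
  -- the new weighted tree
  refine ⟨⟨T.G.deleteEdges {s(v2, v3)} ⊔ fromEdgeSet {s(v1, v3)},
    (fun u v => if s(u, v) = s(v1, v3) then T.w v2 v3
      else if s(u, v) = s(v2, v3) then 0 else T.w u v), ?_, ?_, ?_⟩, ?_, ?_, ?_, ?_⟩
  · -- symm
    intro u v
    rw [show s(v, u) = s(u, v) from Sym2.eq_swap, T.symm u v]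
  · -- pos
    intro u v hadj
    rcases (sup_adj _ _ _ _).mp hadj with h | h
    · by_cases h1 : s(u, v) = s(v1, v3)
      · rw [if_pos h1]; exact T.pos _ _ h23
      · rw [if_neg h1, if_neg (by simpa using (deleteEdges_adj.mp h).2)]
        exact T.pos _ _ (deleteEdges_adj.mp h).1
    · rw [if_pos (Set.mem_singleton_iff.mp ((fromEdgeSet_adj _).mp h).1)]
      exact T.pos _ _ h23
  · -- zero
    intro u v hnadj
    by_cases h1 : s(u, v) = s(v1, v3)
    · exfalso
      apply hnadj
      have huv : u ≠ v := by
        rcases Sym2.eq_iff.mp h1 with ⟨rfl, rfl⟩ | ⟨rfl, rfl⟩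
        · exact h13
        · exact h13.symm
      exact (sup_adj _ _ _ _).mpr (Or.inr ((fromEdgeSet_adj _).mpr ⟨h1, huv⟩))
    · rw [if_neg h1]
      by_cases h2 : s(u, v) = s(v2, v3)
      · rw [if_pos h2]
      · rw [if_neg h2]
        refine T.zero _ _ fun hadj => hnadj ?_
        exact (sup_adj _ _ _ _).mpr (Or.inl (deleteEdges_adj.mpr ⟨hadj, by simpa using h2⟩))
  · -- IsTree
    constructor
    · rw [connected_iff]
      refine ⟨?_, ⟨v1⟩⟩
      have hv1 : ∀ x, (T.G.deleteEdges {s(v2, v3)} ⊔ fromEdgeSet {s(v1, v3)}).Reachable v1 x := by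
        intro x
        have hx := hT.isConnected.preconnected v1 x
        rw [d0', reach_sup_edge hne23] at hx
        have hle : T.G.deleteEdges {s(v2, v3)}
            ≤ T.G.deleteEdges {s(v2, v3)} ⊔ fromEdgeSet {s(v1, v3)} := le_sup_left
        have he' : (T.G.deleteEdges {s(v2, v3)} ⊔ fromEdgeSet {s(v1, v3)}).Adj v1 v3 :=
          (sup_adj _ _ _ _).mpr (Or.inr ((fromEdgeSet_adj _).mpr ⟨rfl, h13⟩))
        rcases hx with h | ⟨h1, h2⟩ | ⟨h1, h2⟩
        · exact h.mono hle
        · exact he'.reachable.trans (h2.mono hle)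
        · exact (hadj12H2.reachable.mono hle).trans (h2.mono hle)
      intro x y
      exact (hv1 x).symm.trans (hv1 y)
    · rw [isAcyclic_iff_forall_adj_isBridge]
      intro x y hxy
      rw [isBridge_iff]
      change ¬((T.G.deleteEdges {s(v2, v3)}
        ⊔ fromEdgeSet {s(v1, v3)}).deleteEdges {s(x, y)}).Reachable x y
      by_cases hc : s(x, y) = s(v1, v3)
      · rcases Sym2.eq_iff.mp hc with ⟨hx, hy⟩ | ⟨hx, hy⟩
        · rw [hx, hy, dC]
          intro h
          exact hbr2 (hadj12H2.symm.reachable.trans h)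
        · rw [hx, hy, show s(v3, v1) = s(v1, v3) from Sym2.eq_swap, dC]
          intro h
          exact hbr2 (hadj12H2.symm.reachable.trans h.symm)
      · have hx2 : (T.G.deleteEdges {s(v2, v3)}).Adj x y := by
          rcases (sup_adj _ _ _ _).mp hxy with h | h
          · exact h
          · exact absurd (Set.mem_singleton_iff.mp ((fromEdgeSet_adj _).mp h).1) hc
        have hKle : T.G.deleteEdges {s(x, y), s(v2, v3)} ≤ T.G.deleteEdges {s(v2, v3)} :=
          deleteEdges_anti (by simp)
        rw [dB _ hc, reach_sup_edge h13]
        rintro (h | ⟨h1, h2⟩ | ⟨h1, h2⟩)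
        · exact hbridge (deleteEdges_adj.mp hx2).1 (h.mono (deleteEdges_anti (by simp)))
        · exact hH2R13 (((h1.mono hKle).symm.trans hx2.reachable).trans (h2.mono hKle).symm)
        · exact hH2R13 ((h2.mono hKle).trans (hx2.symm.reachable.trans (h1.mono hKle)))
  · -- edgeWeights
    apply hweights
    · rfl
    · show (if s(v1, v3) = s(v1, v3) then T.w v2 v3 else _) = T.w v2 v3
      rw [if_pos rfl]
    · intro u v hu1 hu2
      show (if s(u, v) = s(v1, v3) then _ else if s(u, v) = s(v2, v3) then _ else T.w u v)
        = T.w u v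
      rw [if_neg hu1, if_neg hu2]
  · -- not WIso
    rintro ⟨f, -⟩
    have hJ' : Jval T.G = Jval (T.G.deleteEdges {s(v2, v3)} ⊔ fromEdgeSet {s(v1, v3)}) :=
      Jval_iso f
    set Gp := T.G.deleteEdges {s(v2, v3)} ⊔ fromEdgeSet {s(v1, v3)} with hGp
    have hG'a12 : Gp.Adj v1 v2 := (sup_adj _ _ _ _).mpr (Or.inl hadj12H2)
    have hG'a13 : Gp.Adj v1 v3 :=
      (sup_adj _ _ _ _).mpr (Or.inr ((fromEdgeSet_adj _).mpr ⟨rfl, h13⟩))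
    have hG'na23 : ¬Gp.Adj v2 v3 := by
      rintro h
      rcases (sup_adj _ _ _ _).mp h with h | h
      · exact (deleteEdges_adj.mp h).2 rfl
      · exact hE2' (Set.mem_singleton_iff.mp ((fromEdgeSet_adj _).mp h).1).symm
    -- evaluations of the six special terms
    have hF12 : Fval T.G v1 v2
        = ((compSize (T.G.deleteEdges {s(v1, v2), s(v2, v3)}) v1 : ℕ) : ℝ)
          * (((compSize (T.G.deleteEdges {s(v1, v2), s(v2, v3)}) v2
            + compSize (T.G.deleteEdges {s(v1, v2), s(v2, v3)}) v3 : ℕ)) : ℝ) := by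
      rw [Fval, if_pos h12, hcs_del1_v1, hcs_del1_v2]
    have hG'd1_v1 : ∀ y, (Gp.deleteEdges {s(v1, v2)}).Reachable v1 y ↔
        ((T.G.deleteEdges {s(v1, v2), s(v2, v3)}).Reachable v1 y ∨
          (T.G.deleteEdges {s(v1, v2), s(v2, v3)}).Reachable v3 y) := by
      intro y
      rw [dB _ hE1'.symm, reach_sup_edge h13]
      constructor
      · rintro (h | ⟨h1, h2⟩ | ⟨h1, h2⟩)
        · exact Or.inl h
        · exact Or.inr h2
        · exact absurd h1 hR13
      · rintro (h | h)
        · exact Or.inl h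
        · exact Or.inr (Or.inl ⟨Reachable.refl _, h⟩)
    have hG'd1_v2 : ∀ y, (Gp.deleteEdges {s(v1, v2)}).Reachable v2 y ↔
        (T.G.deleteEdges {s(v1, v2), s(v2, v3)}).Reachable v2 y := by
      intro y
      rw [dB _ hE1'.symm, reach_sup_edge h13]
      constructor
      · rintro (h | ⟨h1, h2⟩ | ⟨h1, h2⟩)
        · exact h
        · exact absurd h1.symm hR12
        · exact absurd h1 hR23
      · exact Or.inl
    have hcsG'1 : compSize (Gp.deleteEdges {s(v1, v2)}) v1
        = compSize (T.G.deleteEdges {s(v1, v2), s(v2, v3)}) v1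
          + compSize (T.G.deleteEdges {s(v1, v2), s(v2, v3)}) v3 := by
      rw [compSize_eq_ncard, compSize_eq_ncard, compSize_eq_ncard]
      have hsupp : ((Gp.deleteEdges {s(v1, v2)}).connectedComponentMk v1).supp
          = ((T.G.deleteEdges {s(v1, v2), s(v2, v3)}).connectedComponentMk v1).supp
            ∪ ((T.G.deleteEdges {s(v1, v2), s(v2, v3)}).connectedComponentMk v3).supp := by
        ext y
        simp only [Set.mem_union, mem_supp_iff']
        exact hG'd1_v1 y
      rw [hsupp, Set.ncard_union_eq (hdisj hR13) (Set.toFinite _) (Set.toFinite _)]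
    have hcsG'2 : compSize (Gp.deleteEdges {s(v1, v2)}) v2
        = compSize (T.G.deleteEdges {s(v1, v2), s(v2, v3)}) v2 :=
      compSize_eq_of_reach_iff hG'd1_v2
    have hF12' : Fval Gp v1 v2
        = (((compSize (T.G.deleteEdges {s(v1, v2), s(v2, v3)}) v1
            + compSize (T.G.deleteEdges {s(v1, v2), s(v2, v3)}) v3 : ℕ)) : ℝ)
          * ((compSize (T.G.deleteEdges {s(v1, v2), s(v2, v3)}) v2 : ℕ) : ℝ) := by
      rw [Fval, if_pos hG'a12, hcsG'1, hcsG'2]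
    have hF23 : Fval T.G v2 v3
        = ((compSize (T.G.deleteEdges {s(v2, v3)}) v2 : ℕ) : ℝ)
          * ((compSize (T.G.deleteEdges {s(v2, v3)}) v3 : ℕ) : ℝ) := by
      rw [Fval, if_pos h23]
    have hF23' : Fval Gp v2 v3 = 0 := by
      rw [Fval, if_neg hG'na23]
    have hF13 : Fval T.G v1 v3 = 0 := by
      rw [Fval, if_neg hna13]
    have hF13' : Fval Gp v1 v3
        = ((compSize (T.G.deleteEdges {s(v2, v3)}) v2 : ℕ) : ℝ)
          * ((compSize (T.G.deleteEdges {s(v2, v3)}) v3 : ℕ) : ℝ) := by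
      rw [Fval, if_pos hG'a13, dC, compSize_congr_reach hadj12H2.reachable]
    -- all other terms agree
    have hzero : ∀ u v : Fin n, s(u, v) ≠ s(v1, v2) → s(u, v) ≠ s(v2, v3) →
        s(u, v) ≠ s(v1, v3) → Fval T.G u v = Fval Gp u v := by
      intro u v hs1 hs2 hs3
      have hadj_iff : Gp.Adj u v ↔ T.G.Adj u v := by
        constructor
        · intro h
          rcases (sup_adj _ _ _ _).mp h with h | h
          · exact (deleteEdges_adj.mp h).1
          · exact absurd (Set.mem_singleton_iff.mp ((fromEdgeSet_adj _).mp h).1) hs3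
        · intro h
          exact (sup_adj _ _ _ _).mpr (Or.inl (deleteEdges_adj.mpr ⟨h, by simpa using hs2⟩))
      by_cases hadj : T.G.Adj u v
      · have dA : T.G.deleteEdges {s(u, v)}
            = T.G.deleteEdges {s(u, v), s(v2, v3)} ⊔ fromEdgeSet {s(v2, v3)} := by
          have h := del_sup T.G h23 {s(u, v)} (by simpa using Ne.symm hs2)
          rwa [show (insert s(v2, v3) {s(u, v)} : Set (Sym2 (Fin n)))
            = {s(u, v), s(v2, v3)} from Set.pair_comm _ _] at h
        have hadjK : (T.G.deleteEdges {s(u, v), s(v2, v3)}).Adj v1 v2 := by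
          refine deleteEdges_adj.mpr ⟨h12, ?_⟩
          simp only [Set.mem_insert_iff, Set.mem_singleton_iff]
          push_neg
          exact ⟨Ne.symm hs1, hE12⟩
        have hiff : ∀ x y, (T.G.deleteEdges {s(u, v)}).Reachable x y ↔
            (Gp.deleteEdges {s(u, v)}).Reachable x y := by
          intro x y
          rw [dA, dB _ hs3]
          exact reach_iff_of_reach hne23 h13 hadjK.symm.reachable x y
        rw [Fval, Fval, if_pos hadj, if_pos (hadj_iff.mpr hadj),
          compSize_eq_of_reach_iff (fun y => hiff u y),
          compSize_eq_of_reach_iff (fun y => hiff v y)]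
      · rw [Fval, Fval, if_neg hadj, if_neg (fun hc => hadj (hadj_iff.mp hc))]
    -- sum reduction
    have hne21 : v2 ≠ v1 := hne12.symm
    have hne32 : v3 ≠ v2 := hne23.symm
    have hne31 : v3 ≠ v1 := h13.symm
    have key : Jval T.G - Jval Gp =
        (Fval T.G v1 v2 - Fval Gp v1 v2) + ((Fval T.G v2 v1 - Fval Gp v2 v1)
          + ((Fval T.G v2 v3 - Fval Gp v2 v3) + ((Fval T.G v3 v2 - Fval Gp v3 v2)
          + ((Fval T.G v1 v3 - Fval Gp v1 v3) + (Fval T.G v3 v1 - Fval Gp v3 v1))))) := by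
      have step1 : Jval T.G - Jval Gp
          = ∑ p ∈ Finset.univ ×ˢ Finset.univ, (Fval T.G p.1 p.2 - Fval Gp p.1 p.2) := by
        rw [Finset.sum_product, Jval, Jval, ← Finset.sum_sub_distrib]
        exact Finset.sum_congr rfl fun u _ => (Finset.sum_sub_distrib _ _).symm
      have step2 : ∑ p ∈ Finset.univ ×ˢ Finset.univ, (Fval T.G p.1 p.2 - Fval Gp p.1 p.2)
          = ∑ p ∈ ({(v1, v2), (v2, v1), (v2, v3), (v3, v2), (v1, v3), (v3, v1)} :
              Finset (Fin n × Fin n)), (Fval T.G p.1 p.2 - Fval Gp p.1 p.2) := by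
        rw [Finset.univ_product_univ]
        refine (Finset.sum_subset (Finset.subset_univ _) ?_).symm
        intro p _ hp
        obtain ⟨u, v⟩ := p
        simp only [Finset.mem_insert, Finset.mem_singleton, Prod.mk.injEq, not_or] at hp
        obtain ⟨hp1, hp2, hp3, hp4, hp5, hp6⟩ := hp
        have hs1 : s(u, v) ≠ s(v1, v2) := by
          intro hc
          rcases Sym2.eq_iff.mp hc with ⟨ha, hb⟩ | ⟨ha, hb⟩
          · exact hp1 ⟨ha, hb⟩
          · exact hp2 ⟨ha, hb⟩
        have hs2 : s(u, v) ≠ s(v2, v3) := by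
          intro hc
          rcases Sym2.eq_iff.mp hc with ⟨ha, hb⟩ | ⟨ha, hb⟩
          · exact hp3 ⟨ha, hb⟩
          · exact hp4 ⟨ha, hb⟩
        have hs3 : s(u, v) ≠ s(v1, v3) := by
          intro hc
          rcases Sym2.eq_iff.mp hc with ⟨ha, hb⟩ | ⟨ha, hb⟩
          · exact hp5 ⟨ha, hb⟩
          · exact hp6 ⟨ha, hb⟩
        exact sub_eq_zero_of_eq (hzero u v hs1 hs2 hs3)
      rw [step1, step2]
      rw [Finset.sum_insert (by simp [Prod.ext_iff, hne12, hne23, h13, hne21, hne32, hne31]),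
        Finset.sum_insert (by simp [Prod.ext_iff, hne12, hne23, h13, hne21, hne32, hne31]),
        Finset.sum_insert (by simp [Prod.ext_iff, hne12, hne23, h13, hne21, hne32, hne31]),
        Finset.sum_insert (by simp [Prod.ext_iff, hne12, hne23, h13, hne21, hne32, hne31]),
        Finset.sum_insert (by simp [Prod.ext_iff, hne12, hne23, h13, hne21, hne32, hne31]),
        Finset.sum_singleton]
    have hposJ : 0 < Jval T.G - Jval Gp := by
      rw [key, Fval_symm T.G v2 v1, Fval_symm Gp v2 v1, Fval_symm T.G v3 v2,
        Fval_symm Gp v3 v2, Fval_symm T.G v3 v1, Fval_symm Gp v3 v1,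
        hF12, hF12', hF23, hF23', hF13, hF13']
      have hA : ((compSize (T.G.deleteEdges {s(v1, v2), s(v2, v3)}) v2 : ℕ) : ℝ)
          < ((compSize (T.G.deleteEdges {s(v1, v2), s(v2, v3)}) v1 : ℕ) : ℝ) := by
        exact_mod_cast ha12
      have hB : (0 : ℝ) < ((compSize (T.G.deleteEdges {s(v1, v2), s(v2, v3)}) v3 : ℕ) : ℝ) := by
        exact_mod_cast ha3pos
      push_cast
      nlinarith [mul_pos hB (sub_pos.mpr hA)]
    rw [hJ'] at hposJ
    simp at hposJ
  · -- EdgeTransferSize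
    refine ⟨⟨h12, h23, h13, rfl, ?_, ?_⟩, ?_⟩
    · show (if s(v1, v3) = s(v1, v3) then T.w v2 v3 else _) = T.w v2 v3
      rw [if_pos rfl]
    · intro u v hu1 hu2
      show (if s(u, v) = s(v1, v3) then _ else if s(u, v) = s(v2, v3) then _ else T.w u v)
        = T.w u v
      rw [if_neg hu1, if_neg hu2]
    · exact ha12

end Stmt13Helpers


theorem stmt13 (W : Multiset ℝ) (hW : ∀ x ∈ W, 0 < x) (hcard : 2 ≤ Multiset.card W) {n : ℕ}
    (T : WGraph n) (hT : T.G.IsTree) (hw : T.edgeWeights = W)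
    (hns : ¬ Nonempty (T.G ≃g starGraph n)) :
    ∃ T' : WGraph n, T'.G.IsTree ∧ T'.edgeWeights = W ∧ ¬ WIso T T' ∧
      ∃ v1 v2 v3 : Fin n, EdgeTransferSize T T' v1 v2 v3 := by
  classical
  have hc1 : T.G.edgeFinset.card + 1 = n := by
    simpa using hT.card_edgeFinset
  have hcW : Multiset.card W = T.G.edgeFinset.card := by
    rw [← hw, WGraph.edgeWeights, Multiset.card_map]
    rfl
  have hn3 : 3 ≤ n := by omega
  by_cases hint : ∃ p q r s : Fin n, T.G.Adj p q ∧ T.G.Adj p r ∧ r ≠ q ∧ T.G.Adj q s ∧ s ≠ p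
  · obtain ⟨p, q, r, s, hpq, hpr, hrq, hqs, hsp⟩ := hint
    by_cases horder : compSize (T.G.deleteEdges {s(p, q)}) q
        ≤ compSize (T.G.deleteEdges {s(p, q)}) p
    · obtain ⟨T', ht1, ht2, ht3, ht4⟩ := Stmt13Helpers.aux_main T hT hpq hqs (Ne.symm hsp) horder
      exact ⟨T', ht1, ht2.trans hw, ht3, p, q, s, ht4⟩
    · push_neg at horder
      have horder' : compSize (T.G.deleteEdges {s(q, p)}) p
          ≤ compSize (T.G.deleteEdges {s(q, p)}) q := by
        rw [show s(q, p) = s(p, q) from Sym2.eq_swap]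
        exact le_of_lt horder
      obtain ⟨T', ht1, ht2, ht3, ht4⟩ :=
        Stmt13Helpers.aux_main T hT hpq.symm hpr (Ne.symm hrq) horder'
      exact ⟨T', ht1, ht2.trans hw, ht3, q, p, r, ht4⟩
  · exfalso
    push_neg at hint
    have hdeg : ∃ c : Fin n, 2 ≤ T.G.degree c := by
      by_contra hno
      push_neg at hno
      have hsum := T.G.sum_degrees_eq_twice_card_edges
      have hle : ∑ v, T.G.degree v ≤ ∑ _v : Fin n, 1 :=
        Finset.sum_le_sum fun i _ => by have := hno i; omega
      simp only [Finset.sum_const, Finset.card_univ, Fintype.card_fin, smul_eq_mul,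
        mul_one] at hle
      omega
    obtain ⟨c, hdc⟩ := hdeg
    have hdc' : 1 < (T.G.neighborFinset c).card := hdc
    obtain ⟨nb1, hnb1m, nb2, hnb2m, hnbne⟩ := Finset.one_lt_card.mp hdc'
    have hnb1 : T.G.Adj c nb1 := (SimpleGraph.mem_neighborFinset _ _ _).mp hnb1m
    have hnb2 : T.G.Adj c nb2 := (SimpleGraph.mem_neighborFinset _ _ _).mp hnb2m
    have hleaf : ∀ y, T.G.Adj c y → ∀ z, T.G.Adj y z → z = c := by
      intro y hy z hz
      by_cases h' : nb1 = y
      · have hne2y : nb2 ≠ y := fun hc => hnbne (h'.trans hc.symm)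
        exact hint c y nb2 z hy hnb2 hne2y hz
      · exact hint c y nb1 z hy hnb1 h' hz
    have hall : ∀ x : Fin n, x ≠ c → T.G.Adj c x := by
      intro x hx
      obtain ⟨w0⟩ := hT.isConnected.preconnected c x
      exact Stmt13Helpers.adj_of_leafy hleaf w0.toPath.val w0.toPath.prop hx
    have hadj_iff : ∀ u v : Fin n, T.G.Adj u v ↔ u ≠ v ∧ (u = c ∨ v = c) := by
      intro u v
      constructor
      · intro h
        refine ⟨h.ne, ?_⟩
        by_contra hb
        push_neg at hb
        exact hb.2 (hleaf u (hall u hb.1) v h)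
      · rintro ⟨hne, rfl | rfl⟩
        · exact hall v (fun hc => hne hc.symm)
        · exact (hall u hne).symm
    haveI : NeZero n := ⟨by omega⟩
    apply hns
    have hswap : ∀ a : Fin n, (Equiv.swap c 0 a = 0) ↔ a = c := by
      intro a
      constructor
      · intro h
        have h2 := congrArg (Equiv.swap c 0) h
        rwa [Equiv.swap_apply_self, Equiv.swap_apply_right] at h2
      · intro h
        rw [h]
        exact Equiv.swap_apply_left c 0
    refine ⟨⟨Equiv.swap c 0, ?_⟩⟩
    intro a b
    rw [hadj_iff]
    show (SimpleGraph.fromRel _).Adj _ _ ↔ _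
    rw [SimpleGraph.fromRel_adj]
    constructor
    · rintro ⟨hneq, h0⟩
      refine ⟨fun hc => hneq (by rw [hc]), ?_⟩
      rcases h0 with h0 | h0
      · exact Or.inl ((hswap a).mp (Fin.ext (h0.trans (Fin.val_zero n).symm)))
      · exact Or.inr ((hswap b).mp (Fin.ext (h0.trans (Fin.val_zero n).symm)))
    · rintro ⟨hneq, hc0⟩
      refine ⟨fun h => hneq ((Equiv.swap c 0).injective h), ?_⟩
      rcases hc0 with rfl | rfl
      · exact Or.inl (by rw [(hswap a).mpr rfl]; exact Fin.val_zero n)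
      · exact Or.inr (by rw [(hswap b).mpr rfl]; exact Fin.val_zero n)
end
end

section
/- Let W be a finite multiset of positive reals. Any two polarized weighted paths in 𝒯_W have the same sum of reciprocals of the nonzero eigenvalues of their combinatorial Laplacians (equivalently, for a path P = v_1…v_n with edges e_i = v_iv_{i+1}, they have the same value of Σ_{i=1}^{n−1} i(n−i)/ω(e_i)). -/
open scoped Classical

noncomputable section

open Matrix in
lemma sumInvEig_eq_trace {n : ℕ} (hn : 0 < n) (M G : Matrix (Fin n) (Fin n) ℝ)
    (hM : M.IsHermitian)
    (hker : ∀ x : Fin n → ℝ, M.mulVec x = 0 → ∀ i j, x i = x j)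
    (h1 : M.mulVec (fun _ => 1) = 0)
    (hMG : M * G = 1 - (n : ℝ)⁻¹ • Matrix.of (fun _ _ => (1:ℝ)))
    (hJG : (Matrix.of (fun _ _ => (1:ℝ)) : Matrix (Fin n) (Fin n) ℝ) * G = 0) :
    sumInvEig M = G.trace := by
  set J : Matrix (Fin n) (Fin n) ℝ := Matrix.of (fun _ _ => (1:ℝ)) with hJ
  set V : Matrix (Fin n) (Fin n) ℝ := (hM.eigenvectorUnitary : Matrix (Fin n) (Fin n) ℝ) with hV
  have hVsV : star V * V = 1 := mem_unitaryGroup_iff'.mp hM.eigenvectorUnitary.2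
  have hVVs : V * star V = 1 := mem_unitaryGroup_iff.mp hM.eigenvectorUnitary.2
  set ev : Fin n → ℝ := hM.eigenvalues with hev
  have hspec : M = V * Matrix.diagonal ev * star V := by
    have := hM.spectral_theorem
    simpa using this
  -- orthonormal columns
  have horth : ∀ i j, (∑ k, V k i * V k j) = if i = j then (1:ℝ) else 0 := by
    intro i j
    have := congrFun (congrFun hVsV i) j
    simpa [Matrix.mul_apply, Matrix.one_apply, mul_comm] using this
  have hMV : M * V = V * Matrix.diagonal ev := by
    rw [hspec, Matrix.mul_assoc, Matrix.mul_assoc, hVsV, Matrix.mul_one]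
  -- columns with zero eigenvalue are constant
  have hcol : ∀ i, ev i = 0 → ∃ c : ℝ, ∀ k, V k i = c := by
    intro i h0
    have hx : M.mulVec (fun k => V k i) = 0 := by
      funext k
      have h2 := congrFun (congrFun hMV k) i
      rw [Matrix.mul_diagonal, h0, mul_zero, Matrix.mul_apply] at h2
      simpa [Matrix.mulVec, dotProduct] using h2
    exact ⟨V ⟨0, hn⟩ i, fun k => hker _ hx k ⟨0, hn⟩⟩
  -- existence of a zero eigenvalue
  have hdet : M.det = 0 := by
    rw [← Matrix.exists_mulVec_eq_zero_iff]
    refine ⟨fun _ => 1, ?_, h1⟩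
    intro h
    exact one_ne_zero (congrFun h ⟨0, hn⟩)
  have hprod : ∏ i, ev i = 0 := by
    have := hM.det_eq_prod_eigenvalues
    simp only [hdet] at this
    exact_mod_cast this.symm
  obtain ⟨i₀, -, hi₀⟩ := Finset.prod_eq_zero_iff.mp hprod
  obtain ⟨c, hc⟩ := hcol i₀ hi₀
  have hnc : (n : ℝ) * (c * c) = 1 := by
    have := horth i₀ i₀
    simp only [if_pos rfl] at this
    calc (n : ℝ) * (c * c) = ∑ _k : Fin n, c * c := by
          simp [Finset.sum_const, Finset.card_univ, mul_comm]
      _ = ∑ k, V k i₀ * V k i₀ := by simp [hc]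
      _ = 1 := this
  have hcne : c ≠ 0 := by
    intro h; rw [h] at hnc; simp at hnc
  have huniq : ∀ i, ev i = 0 → i = i₀ := by
    intro i hi
    by_contra hne
    obtain ⟨d, hd⟩ := hcol i hi
    have hnd : (n : ℝ) * (d * d) = 1 := by
      have := horth i i
      simp only [if_pos rfl] at this
      calc (n : ℝ) * (d * d) = ∑ _k : Fin n, d * d := by
            simp [Finset.sum_const, Finset.card_univ, mul_comm]
        _ = ∑ k, V k i * V k i := by simp [hd]
        _ = 1 := this
    have h0 : (n : ℝ) * (d * c) = 0 := by
      have := horth i i₀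
      rw [if_neg hne] at this
      calc (n : ℝ) * (d * c) = ∑ _k : Fin n, d * c := by
            simp [Finset.sum_const, Finset.card_univ, mul_comm]
        _ = ∑ k, V k i * V k i₀ := by simp [hd, hc]
        _ = 0 := this
    have hdne : d ≠ 0 := by intro h; rw [h] at hnd; simp at hnd
    have : (n:ℝ) ≠ 0 := Nat.cast_ne_zero.mpr hn.ne'
    have := mul_ne_zero this (mul_ne_zero hdne hcne)
    exact this h0
  -- column sums
  have hsumcol : ∀ j, j ≠ i₀ → (∑ k, V k j) = 0 := by
    intro j hj
    have := horth j i₀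
    rw [if_neg hj] at this
    have h2 : (∑ k, V k j) * c = 0 := by
      rw [Finset.sum_mul]
      rw [← this]
      exact Finset.sum_congr rfl fun k _ => by rw [hc k]
    exact (mul_eq_zero.mp h2).resolve_right hcne
  set Q : Matrix (Fin n) (Fin n) ℝ :=
    V * Matrix.diagonal (fun i => (ev i)⁻¹) * star V with hQ
  have htraceQ : Q.trace = ∑ i, (ev i)⁻¹ := by
    rw [hQ, Matrix.trace_mul_cycle, hVsV, Matrix.one_mul, Matrix.trace_diagonal]
  -- Q * M = 1 - n⁻¹ • J
  have hdiagmul : Matrix.diagonal (fun i => (ev i)⁻¹) * Matrix.diagonal ev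
      = 1 - Matrix.diagonal (fun i => if i = i₀ then (1:ℝ) else 0) := by
    rw [Matrix.diagonal_mul_diagonal]
    ext i j
    by_cases hij : i = j
    · subst hij
      by_cases h : i = i₀
      · subst h
        simp [Matrix.diagonal_apply, Matrix.one_apply, Matrix.sub_apply, hi₀]
      · have hne : ev i ≠ 0 := fun h0 => h (huniq i h0)
        simp [Matrix.diagonal_apply, Matrix.one_apply, Matrix.sub_apply, h,
          inv_mul_cancel₀ hne]
    · simp [Matrix.diagonal_apply, Matrix.one_apply, Matrix.sub_apply, hij]
  have hE : V * Matrix.diagonal (fun i => if i = i₀ then (1:ℝ) else 0) * star V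
      = (n : ℝ)⁻¹ • J := by
    have hcc : c * c = (n : ℝ)⁻¹ := eq_inv_of_mul_eq_one_right hnc
    ext u v
    rw [Matrix.mul_apply]
    calc ∑ x, (V * Matrix.diagonal (fun i => if i = i₀ then (1:ℝ) else 0)) u x * star V x v
        = ∑ x, (if x = i₀ then V u x * V v x else 0) := by
          refine Finset.sum_congr rfl fun x _ => ?_
          rw [Matrix.mul_diagonal]
          simp only [Matrix.star_apply, star_trivial, mul_ite, mul_one, mul_zero, ite_mul,
            zero_mul]
      _ = V u i₀ * V v i₀ := by
          rw [Finset.sum_ite_eq' Finset.univ i₀ (fun x => V u x * V v x)]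
          simp
      _ = ((n : ℝ)⁻¹ • J) u v := by
          rw [hc u, hc v, hcc]
          simp [hJ]
  have hQM : Q * M = 1 - (n : ℝ)⁻¹ • J := by
    have key : star V * (V * (Matrix.diagonal ev * star V)) = Matrix.diagonal ev * star V := by
      rw [← Matrix.mul_assoc, hVsV, Matrix.one_mul]
    have h2 : Q * M = V * ((Matrix.diagonal fun i => (ev i)⁻¹) * Matrix.diagonal ev) * star V := by
      rw [hQ, hspec]
      simp only [Matrix.mul_assoc, key]
    rw [h2, hdiagmul, Matrix.mul_sub, Matrix.sub_mul, Matrix.mul_one, hVVs, hE]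
  -- Q * J = 0
  have hQJ : Q * J = 0 := by
    ext u v
    simp only [Matrix.mul_apply, hJ, Matrix.of_apply, Matrix.zero_apply, mul_one]
    have hQapp : ∀ u x, Q u x = ∑ j, V u j * (ev j)⁻¹ * V x j := by
      intro u x
      rw [hQ, Matrix.mul_apply]
      refine Finset.sum_congr rfl fun j _ => ?_
      rw [Matrix.mul_diagonal]
      simp [Matrix.star_apply]
    calc ∑ x, Q u x = ∑ x, ∑ j, V u j * (ev j)⁻¹ * V x j := by
          exact Finset.sum_congr rfl fun x _ => hQapp u x
      _ = ∑ j, V u j * (ev j)⁻¹ * (∑ x, V x j) := by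
          rw [Finset.sum_comm]
          exact Finset.sum_congr rfl fun j _ => by rw [Finset.mul_sum]
      _ = 0 := by
          apply Finset.sum_eq_zero
          intro j _
          by_cases h : j = i₀
          · subst h; simp [hi₀]
          · rw [hsumcol j h, mul_zero]
  -- Q = G
  have hQG : Q = G := by
    have h1 : M * G + (n : ℝ)⁻¹ • J = 1 := by rw [hMG, sub_add_cancel]
    have h2 : Q * (M * G + (n : ℝ)⁻¹ • J) = Q := by rw [h1, Matrix.mul_one]
    rw [Matrix.mul_add, Matrix.mul_smul] at h2
    rw [hQJ, smul_zero, add_zero, ← Matrix.mul_assoc, hQM] at h2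
    rw [Matrix.sub_mul, Matrix.one_mul, Matrix.smul_mul, hJG, smul_zero, sub_zero] at h2
    exact h2.symm
  rw [sumInvEig, dif_pos hM, ← htraceQ, hQG]


namespace PfAux
open Finset

/-- flow function -/
def Ff (n i v : ℕ) : ℝ := (if v ≤ i then 1 else 0) - ((i : ℝ) + 1) / n

/-- potential -/
def tf (n : ℕ) (w : ℕ → ℝ) (u v : ℕ) : ℝ := -∑ i ∈ Finset.range u, Ff n i v / w i

/-- normalized potential -/
def gf (n : ℕ) (w : ℕ → ℝ) (u v : ℕ) : ℝ :=
  tf n w u v - (n : ℝ)⁻¹ * ∑ x ∈ Finset.range n, tf n w x v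

lemma gf_diff (n : ℕ) (w : ℕ → ℝ) (u v : ℕ) :
    gf n w u v - gf n w (u + 1) v = Ff n u v / w u := by
  simp only [gf, tf, Finset.sum_range_succ]
  ring

lemma sum_gf (n : ℕ) (hn : 0 < n) (w : ℕ → ℝ) (v : ℕ) :
    ∑ u ∈ Finset.range n, gf n w u v = 0 := by
  have hne : (n : ℝ) ≠ 0 := Nat.cast_ne_zero.mpr hn.ne'
  simp only [gf, Finset.sum_sub_distrib, Finset.sum_const, Finset.card_range, nsmul_eq_mul]
  field_simp
  ring

lemma sum_Ff (n : ℕ) (hn : 0 < n) (i : ℕ) (hi : i < n) :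
    ∑ v ∈ Finset.range n, Ff n i v = 0 := by
  have hne : (n : ℝ) ≠ 0 := Nat.cast_ne_zero.mpr hn.ne'
  simp only [Ff, Finset.sum_sub_distrib, Finset.sum_const, Finset.card_range, nsmul_eq_mul]
  have h1 : ∑ v ∈ Finset.range n, (if v ≤ i then (1:ℝ) else 0)
      = ((Finset.range n).filter (fun v => v ≤ i)).card := by
    rw [Finset.sum_boole]
  have h2 : (Finset.range n).filter (fun v => v ≤ i) = Finset.range (i + 1) := by
    ext x
    simp only [Finset.mem_filter, Finset.mem_range]
    omega
  rw [h1, h2, Finset.card_range]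
  push_cast
  field_simp
  ring

/-- counting lemma -/
lemma sum_sum_range (h : ℕ → ℝ) : ∀ n : ℕ,
    ∑ a ∈ Finset.range n, ∑ i ∈ Finset.range a, h i
      = ∑ i ∈ Finset.range n, ((n - 1 - i : ℕ) : ℝ) * h i := by
  intro n
  induction n with
  | zero => simp
  | succ m ih =>
      rw [Finset.sum_range_succ, ih, Finset.sum_range_succ]
      have : ((m + 1 - 1 - m : ℕ) : ℝ) = 0 := by norm_num
      rw [this, zero_mul, add_zero]
      rw [← Finset.sum_add_distrib]
      refine Finset.sum_congr rfl fun i hi => ?_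
      rw [Finset.mem_range] at hi
      have h1 : ((m - 1 - i : ℕ) : ℝ) + 1 = ((m + 1 - 1 - i : ℕ) : ℝ) := by
        have : (m - 1 - i) + 1 = m + 1 - 1 - i := by omega
        exact_mod_cast congrArg (Nat.cast : ℕ → ℝ) this
      calc ((m - 1 - i : ℕ) : ℝ) * h i + h i = (((m - 1 - i : ℕ) : ℝ) + 1) * h i := by ring
        _ = ((m + 1 - 1 - i : ℕ) : ℝ) * h i := by rw [h1]

lemma tf_diag (n : ℕ) (w : ℕ → ℝ) (a : ℕ) :
    tf n w a a = ∑ i ∈ Finset.range a, ((i : ℝ) + 1) / n / w i := by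
  rw [tf, neg_eq_iff_eq_neg, ← Finset.sum_neg_distrib]
  refine Finset.sum_congr rfl fun i hi => ?_
  rw [Finset.mem_range] at hi
  have : ¬ (a ≤ i) := by omega
  rw [Ff, if_neg this]
  ring

lemma sum_gf_diag (n : ℕ) (hn : 0 < n) (w : ℕ → ℝ) :
    ∑ a ∈ Finset.range n, gf n w a a
      = ∑ i ∈ Finset.range (n - 1), ((i : ℝ) + 1) * ((n - 1 - i : ℕ) : ℝ) / ((n : ℝ) * w i) := by
  have hS2 : ∑ a ∈ Finset.range n, ∑ x ∈ Finset.range n, tf n w x a = 0 := by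
    have inner : ∀ a, ∑ x ∈ Finset.range n, tf n w x a
        = -∑ i ∈ Finset.range n, ((n - 1 - i : ℕ) : ℝ) * (Ff n i a / w i) := by
      intro a
      rw [← sum_sum_range (fun i => Ff n i a / w i) n, ← Finset.sum_neg_distrib]
      rfl
    rw [Finset.sum_congr rfl fun a _ => inner a, Finset.sum_neg_distrib, neg_eq_zero,
      Finset.sum_comm]
    apply Finset.sum_eq_zero
    intro i hi
    rw [Finset.mem_range] at hi
    have : ∀ a ∈ Finset.range n, ((n - 1 - i : ℕ) : ℝ) * (Ff n i a / w i)
        = ((n - 1 - i : ℕ) : ℝ) / w i * Ff n i a := fun a _ => by ring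
    rw [Finset.sum_congr rfl this, ← Finset.mul_sum, sum_Ff n hn i hi, mul_zero]
  have hS1 : ∑ a ∈ Finset.range n, tf n w a a
      = ∑ i ∈ Finset.range n, ((n - 1 - i : ℕ) : ℝ) * (((i : ℝ) + 1) / n / w i) := by
    rw [Finset.sum_congr rfl fun a _ => tf_diag n w a]
    exact sum_sum_range _ n
  have hsplit : ∑ a ∈ Finset.range n, gf n w a a
      = ∑ a ∈ Finset.range n, tf n w a a
        - (n : ℝ)⁻¹ * ∑ a ∈ Finset.range n, ∑ x ∈ Finset.range n, tf n w x a := by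
    simp only [gf, Finset.sum_sub_distrib, Finset.mul_sum]
  rw [hsplit, hS2, mul_zero, sub_zero, hS1]
  obtain ⟨m, rfl⟩ : ∃ m, n = m + 1 := ⟨n - 1, by omega⟩
  rw [Finset.sum_range_succ]
  have hlast : ((m + 1 - 1 - m : ℕ) : ℝ) = 0 := by norm_num
  rw [hlast, zero_mul, add_zero]
  have : m + 1 - 1 = m := rfl
  rw [this]
  refine Finset.sum_congr rfl fun i hi => ?_
  rw [div_div]
  ring

end PfAux

section PathSide
open PfAux
variable {n : ℕ} (T : WGraph n) (f : SimpleGraph.pathGraph n ≃g T.G)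

def wseq : ℕ → ℝ := fun i =>
  if h : i + 1 < n then T.w (f ⟨i, by omega⟩) (f ⟨i + 1, h⟩) else 1

lemma wseq_pos {i : ℕ} (h : i + 1 < n) : 0 < wseq T f i := by
  rw [wseq, dif_pos h]
  apply T.pos
  exact f.map_adj_iff.mpr (SimpleGraph.pathGraph_adj.mpr (Or.inl rfl))

lemma wseq_ne {i : ℕ} (h : i + 1 < n) : wseq T f i ≠ 0 := (wseq_pos T f h).ne'

lemma w_apply (a b : Fin n) : T.w (f a) (f b) =
    if a.val + 1 = b.val then wseq T f a.val
    else if b.val + 1 = a.val then wseq T f b.val else 0 := by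
  by_cases h1 : a.val + 1 = b.val
  · rw [if_pos h1, wseq, dif_pos (h1 ▸ b.isLt)]
    have e2 : (⟨a.val + 1, h1 ▸ b.isLt⟩ : Fin n) = b := Fin.ext h1
    rw [Fin.eta, e2]
  · by_cases h2 : b.val + 1 = a.val
    · rw [if_neg h1, if_pos h2, T.symm, wseq, dif_pos (h2 ▸ a.isLt)]
      have e2 : (⟨b.val + 1, h2 ▸ a.isLt⟩ : Fin n) = a := Fin.ext h2
      rw [Fin.eta, e2]
    · rw [if_neg h1, if_neg h2]
      apply T.zero
      intro hadj
      rcases SimpleGraph.pathGraph_adj.mp (f.map_adj_iff.mp hadj) with h | h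
      · exact h1 h
      · exact h2 h

lemma rowsum (a : Fin n) (ψ : Fin n → ℝ) :
    ∑ x, T.w (f a) (f x) * ψ x
      = (if h : a.val + 1 < n then wseq T f a.val * ψ ⟨a.val + 1, h⟩ else 0)
      + (if h : 0 < a.val then wseq T f (a.val - 1) *
            ψ ⟨a.val - 1, lt_of_le_of_lt (Nat.sub_le _ _) a.isLt⟩ else 0) := by
  have key : ∀ x : Fin n, T.w (f a) (f x) * ψ x
      = (if h : a.val + 1 < n then
          (if x = (⟨a.val + 1, h⟩ : Fin n) then wseq T f a.val * ψ x else 0) else 0)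
      + (if h : 0 < a.val then
          (if x = (⟨a.val - 1, lt_of_le_of_lt (Nat.sub_le _ _) a.isLt⟩ : Fin n) then
            wseq T f (a.val - 1) * ψ x else 0) else 0) := by
    intro x
    rw [w_apply]
    by_cases h1 : a.val + 1 = x.val
    · have hlt : a.val + 1 < n := h1 ▸ x.isLt
      rw [if_pos h1, dif_pos hlt, if_pos (Fin.ext h1.symm)]
      have e1 : ¬ (x = (⟨a.val - 1, lt_of_le_of_lt (Nat.sub_le _ _) a.isLt⟩ : Fin n)) := by
        intro heq
        have hxx : x.val = a.val - 1 := by rw [heq]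
        omega
      by_cases h0 : 0 < a.val
      · rw [dif_pos h0, if_neg e1, add_zero]
      · rw [dif_neg h0, add_zero]
    · by_cases h2 : x.val + 1 = a.val
      · have h0 : 0 < a.val := by omega
        rw [if_neg h1, if_pos h2, dif_pos h0]
        have hx : x = (⟨a.val - 1, lt_of_le_of_lt (Nat.sub_le _ _) a.isLt⟩ : Fin n) :=
          Fin.ext (show x.val = a.val - 1 by omega)
        rw [if_pos hx]
        have hv : x.val = a.val - 1 := by omega
        rw [hv]
        by_cases hlt2 : a.val + 1 < n
        · have e1 : ¬ (x = (⟨a.val + 1, hlt2⟩ : Fin n)) := by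
            intro heq
            have hxx : x.val = a.val + 1 := by rw [heq]
            omega
          rw [dif_pos hlt2, if_neg e1, zero_add]
        · rw [dif_neg hlt2, zero_add]
      · rw [if_neg h1, if_neg h2, zero_mul]
        have e1 : (if h : a.val + 1 < n then
            (if x = (⟨a.val + 1, h⟩ : Fin n) then wseq T f a.val * ψ x else 0) else 0) = 0 := by
          split_ifs with h hx
          · have hxx : x.val = a.val + 1 := by rw [hx]
            omega
          · rfl
          · rfl
        have e2 : (if h : 0 < a.val then
            (if x = (⟨a.val - 1, lt_of_le_of_lt (Nat.sub_le _ _) a.isLt⟩ : Fin n) then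
              wseq T f (a.val - 1) * ψ x else 0) else 0) = 0 := by
          split_ifs with h hx
          · have hxx : x.val = a.val - 1 := by rw [hx]
            omega
          · rfl
          · rfl
        rw [e1, e2, add_zero]
  rw [Finset.sum_congr rfl fun x _ => key x, Finset.sum_add_distrib]
  congr 1
  · by_cases h : a.val + 1 < n
    · simp only [dif_pos h]
      rw [Finset.sum_ite_eq' Finset.univ]
      simp
    · simp only [dif_neg h, Finset.sum_const_zero]
  · by_cases h : 0 < a.val
    · simp only [dif_pos h]
      rw [Finset.sum_ite_eq' Finset.univ]
      simp
    · simp only [dif_neg h, Finset.sum_const_zero]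


def Gm : Matrix (Fin n) (Fin n) ℝ :=
  Matrix.of fun u v => gf n (wseq T f) (f.symm u).val (f.symm v).val

lemma lap_isHermitian : T.lap.IsHermitian := by
  show Matrix.conjTranspose T.lap = T.lap
  ext i j
  simp only [Matrix.conjTranspose_apply, WGraph.lap, Matrix.of_apply, star_trivial]
  rw [T.symm j i]
  by_cases h : i = j
  · subst h; simp
  · simp [h, Ne.symm h]

lemma lap_mulVec_one : T.lap.mulVec (fun _ => (1:ℝ)) = 0 := by
  funext u
  simp only [Matrix.mulVec, dotProduct, WGraph.lap, Matrix.of_apply, mul_one,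
    Pi.zero_apply]
  rw [Finset.sum_sub_distrib, Finset.sum_ite_eq Finset.univ u]
  simp [WGraph.deg]

lemma deg_eq_sum (a : Fin n) : T.deg (f a) = ∑ c, T.w (f a) (f c) :=
  (Equiv.sum_comp f.toEquiv (fun z => T.w (f a) z)).symm

lemma lap_row (a : Fin n) (ψ : Fin n → ℝ) :
    ∑ x, T.lap (f a) x * ψ x = ∑ c, T.w (f a) (f c) * (ψ (f a) - ψ (f c)) := by
  have expand : ∀ x, T.lap (f a) x * ψ x
      = (if f a = x then T.deg (f a) else 0) * ψ x - T.w (f a) x * ψ x := by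
    intro x; simp only [WGraph.lap, Matrix.of_apply]; ring
  rw [Finset.sum_congr rfl fun x _ => expand x, Finset.sum_sub_distrib]
  have h1 : ∑ x, (if f a = x then T.deg (f a) else 0) * ψ x = T.deg (f a) * ψ (f a) := by
    rw [Finset.sum_eq_single (f a)]
    · rw [if_pos rfl]
    · intro c _ hc; rw [if_neg (fun hh => hc hh.symm), zero_mul]
    · simp
  have h3 : ∑ x, T.w (f a) x * ψ x = ∑ c, T.w (f a) (f c) * ψ (f c) :=
    (Equiv.sum_comp f.toEquiv (fun z => T.w (f a) z * ψ z)).symm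
  rw [h1, h3, deg_eq_sum T f a, Finset.sum_mul, ← Finset.sum_sub_distrib]
  refine Finset.sum_congr rfl fun c _ => ?_
  ring

lemma lap_mul_Gm (hn : 0 < n) :
    T.lap * Gm T f = 1 - (n : ℝ)⁻¹ • Matrix.of (fun _ _ => (1:ℝ)) := by
  have hnR : (n : ℝ) ≠ 0 := Nat.cast_ne_zero.mpr hn.ne'
  ext u v
  obtain ⟨a, rfl⟩ : ∃ a, f a = u := ⟨f.symm u, f.apply_symm_apply u⟩
  obtain ⟨b, rfl⟩ : ∃ b, f b = v := ⟨f.symm v, f.apply_symm_apply v⟩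
  have hGm : ∀ x : Fin n, Gm T f (f x) (f b) = gf n (wseq T f) x.val b.val := by
    intro x; simp [Gm, f.symm_apply_apply]
  rw [Matrix.mul_apply]
  have hψ : ∀ x, Gm T f x (f b) = (fun z => Gm T f z (f b)) x := fun _ => rfl
  rw [lap_row T f a (fun z => Gm T f z (f b))]
  have hterm : ∀ c : Fin n, Gm T f (f a) (f b) - Gm T f (f c) (f b)
      = gf n (wseq T f) a.val b.val - gf n (wseq T f) c.val b.val := by
    intro c; rw [hGm, hGm]
  rw [Finset.sum_congr rfl fun c _ => by rw [hterm c]]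
  rw [rowsum T f a (fun c => gf n (wseq T f) a.val b.val - gf n (wseq T f) c.val b.val)]
  have hA : (if h : a.val + 1 < n then wseq T f a.val *
        (gf n (wseq T f) a.val b.val
          - gf n (wseq T f) ((⟨a.val + 1, h⟩ : Fin n)).val b.val) else 0)
      = (if a.val + 1 < n then Ff n a.val b.val else 0) := by
    split_ifs with h
    · show wseq T f a.val * (gf n (wseq T f) a.val b.val
          - gf n (wseq T f) (a.val + 1) b.val) = _
      rw [gf_diff]
      field_simp [wseq_ne T f h]
    · rfl
  have hB : (if h : 0 < a.val then wseq T f (a.val - 1) *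
        (gf n (wseq T f) a.val b.val
          - gf n (wseq T f) ((⟨a.val - 1, lt_of_le_of_lt (Nat.sub_le _ _) a.isLt⟩ : Fin n)).val
            b.val) else 0)
      = (if 0 < a.val then -Ff n (a.val - 1) b.val else 0) := by
    split_ifs with h
    · show wseq T f (a.val - 1) * (gf n (wseq T f) a.val b.val
          - gf n (wseq T f) (a.val - 1) b.val) = _
      have hlt : (a.val - 1) + 1 < n := by omega
      have hd := gf_diff n (wseq T f) (a.val - 1) b.val
      have he2 : (a.val - 1) + 1 = a.val := by omega
      rw [he2] at hd
      have hrw : gf n (wseq T f) a.val b.val - gf n (wseq T f) (a.val - 1) b.val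
          = -(Ff n (a.val - 1) b.val / wseq T f (a.val - 1)) := by linarith [hd]
      rw [hrw]
      field_simp [wseq_ne T f hlt]
    · rfl
  rw [hA, hB]
  have hfab : (f a = f b) ↔ (a.val = b.val) := by
    rw [EmbeddingLike.apply_eq_iff_eq, Fin.ext_iff]
  simp only [Matrix.sub_apply, Matrix.one_apply, Matrix.smul_apply, Matrix.of_apply,
    smul_eq_mul, mul_one]
  simp only [hfab]
  have hb' : b.val < n := b.isLt
  have ha' : a.val < n := a.isLt
  by_cases h1 : a.val + 1 < n <;> by_cases h0 : 0 < a.val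
  · rw [if_pos h1, if_pos h0]
    simp only [Ff]
    rw [Nat.cast_sub (show 1 ≤ a.val by omega), Nat.cast_one]
    split_ifs <;> first | omega | (field_simp; ring) | field_simp
  · have hA0 : a.val = 0 := by omega
    rw [if_pos h1, if_neg h0, add_zero, hA0]
    simp only [Ff, Nat.cast_zero]
    split_ifs <;> first | omega | (field_simp; ring) | field_simp
  · have hAn : ((a.val : ℝ) + 1) = n := by exact_mod_cast (show a.val + 1 = n by omega)
    rw [if_neg h1, if_pos h0, zero_add]
    simp only [Ff]
    rw [Nat.cast_sub (show 1 ≤ a.val by omega), Nat.cast_one]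
    split_ifs <;> first | omega | (field_simp; linarith [hAn]) | (field_simp; ring) | field_simp | linarith [hAn]
  · have hn1 : n = 1 := by omega
    have hA0 : a.val = 0 := by omega
    have hB0 : b.val = 0 := by omega
    rw [if_neg h1, if_neg h0, hA0, hB0, hn1]
    norm_num

lemma ones_mul_Gm (hn : 0 < n) :
    (Matrix.of (fun _ _ => (1:ℝ)) : Matrix (Fin n) (Fin n) ℝ) * Gm T f = 0 := by
  ext u v
  rw [Matrix.mul_apply]
  simp only [Matrix.of_apply, one_mul, Matrix.zero_apply, Gm]
  rw [← Equiv.sum_comp f.toEquiv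
    (fun z => gf n (wseq T f) ((f.symm z)).val ((f.symm v)).val)]
  have hsimp : ∀ y : Fin n, (f.symm (f.toEquiv y) : Fin n) = y := fun y =>
    f.toEquiv.symm_apply_apply y
  rw [Finset.sum_congr rfl fun y _ =>
    congrArg (fun t : Fin n => gf n (wseq T f) t.val ((f.symm v)).val) (hsimp y)]
  rw [Fin.sum_univ_eq_sum_range (fun m => gf n (wseq T f) m ((f.symm v)).val) n]
  exact sum_gf n hn (wseq T f) _

lemma lap_ker (hn : 0 < n) (_hf : f = f) :
    ∀ x : Fin n → ℝ, T.lap.mulVec x = 0 → ∀ i j, x i = x j := by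
  intro x hx
  have row : ∀ a : Fin n,
      ∑ c, T.w (f a) (f c) * (x (f a) - x (f c)) = 0 := by
    intro a
    have h := congrFun hx (f a)
    simp only [Matrix.mulVec, dotProduct, Pi.zero_apply] at h
    rw [lap_row T f a x] at h
    exact h
  have step : ∀ m, ∀ hm : m + 1 < n,
      x (f ⟨m, Nat.lt_of_succ_lt hm⟩) = x (f ⟨m + 1, hm⟩) := by
    intro m
    induction m using Nat.strong_induction_on with
    | _ m ih =>
      intro hm
      have hr := row ⟨m, Nat.lt_of_succ_lt hm⟩
      rw [rowsum T f ⟨m, Nat.lt_of_succ_lt hm⟩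
        (fun c => x (f ⟨m, Nat.lt_of_succ_lt hm⟩) - x (f c))] at hr
      rw [dif_pos hm] at hr
      by_cases h0 : 0 < m
      · rw [dif_pos h0] at hr
        have hmm : ((⟨m - 1 + 1, by omega⟩ : Fin n)) = ⟨m, Nat.lt_of_succ_lt hm⟩ :=
          Fin.ext (show m - 1 + 1 = m by omega)
        have hih := ih (m - 1) (by omega) (by omega)
        rw [hmm] at hih
        rw [hih, sub_self, mul_zero, add_zero] at hr
        rcases mul_eq_zero.mp hr with h | h
        · exact absurd h (wseq_ne T f hm)
        · linarith [h]
      · rw [dif_neg h0, add_zero] at hr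
        rcases mul_eq_zero.mp hr with h | h
        · exact absurd h (wseq_ne T f hm)
        · linarith [h]
  have base : ∀ m, ∀ hm : m < n, x (f ⟨m, hm⟩) = x (f ⟨0, hn⟩) := by
    intro m
    induction m with
    | zero => intro hm; rfl
    | succ k ih =>
        intro hm
        rw [← step k hm]
        exact ih (by omega)
  intro i j
  have hi := base (f.symm i).val (f.symm i).isLt
  have hj := base (f.symm j).val (f.symm j).isLt
  rw [Fin.eta, f.apply_symm_apply] at hi
  rw [Fin.eta, f.apply_symm_apply] at hj
  rw [hi, hj]

lemma trace_Gm (hn : 0 < n) : (Gm T f).trace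
    = ∑ i ∈ Finset.range (n - 1),
        ((i : ℝ) + 1) * ((n - 1 - i : ℕ) : ℝ) / ((n : ℝ) * wseq T f i) := by
  have h1 : (Gm T f).trace = ∑ u, Gm T f u u := by
    simp [Matrix.trace, Matrix.diag]
  rw [h1, ← Equiv.sum_comp f.toEquiv (fun z => Gm T f z z)]
  have hsimp : ∀ y : Fin n, (f.symm (f.toEquiv y) : Fin n) = y := fun y =>
    f.toEquiv.symm_apply_apply y
  have h2 : ∀ y : Fin n, Gm T f (f.toEquiv y) (f.toEquiv y)
      = gf n (wseq T f) y.val y.val := by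
    intro y
    show gf n (wseq T f) (f.symm (f.toEquiv y)).val (f.symm (f.toEquiv y)).val = _
    rw [hsimp y]
  rw [Finset.sum_congr rfl fun y _ => h2 y]
  rw [Fin.sum_univ_eq_sum_range (fun m => gf n (wseq T f) m m) n]
  exact sum_gf_diag n hn (wseq T f)


def phi (hn : 0 < n) : ℕ → Sym2 (Fin n) := fun i =>
  s(f ⟨min i (n - 1), by omega⟩, f ⟨min (i + 1) (n - 1), by omega⟩)

lemma phi_eq (hn : 0 < n) {i : ℕ} (hi : i < n - 1) :
    phi T f hn i = s(f ⟨i, by omega⟩, f ⟨i + 1, by omega⟩) := by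
  have e1 : (⟨min i (n - 1), by omega⟩ : Fin n) = (⟨i, by omega⟩ : Fin n) :=
    Fin.ext (show min i (n - 1) = i by omega)
  have e2 : (⟨min (i + 1) (n - 1), by omega⟩ : Fin n) = (⟨i + 1, by omega⟩ : Fin n) :=
    Fin.ext (show min (i + 1) (n - 1) = i + 1 by omega)
  rw [phi, e1, e2]

lemma edgeFinset_eq (hn : 0 < n) :
    T.G.edgeFinset = (Finset.range (n - 1)).image (phi T f hn) := by
  ext e
  simp only [SimpleGraph.mem_edgeFinset, Finset.mem_image, Finset.mem_range]
  constructor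
  · intro he
    induction e with
    | _ u v =>
      rw [SimpleGraph.mem_edgeSet] at he
      obtain ⟨a, rfl⟩ : ∃ a, f a = u := ⟨f.symm u, f.apply_symm_apply u⟩
      obtain ⟨b, rfl⟩ : ∃ b, f b = v := ⟨f.symm v, f.apply_symm_apply v⟩
      rcases SimpleGraph.pathGraph_adj.mp (f.map_adj_iff.mp he) with h | h
      · refine ⟨a.val, by omega, ?_⟩
        rw [phi_eq T f hn (by omega)]
        have ea : (⟨a.val, by omega⟩ : Fin n) = a := Fin.ext rfl
        have eb : (⟨a.val + 1, by omega⟩ : Fin n) = b := Fin.ext h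
        rw [ea, eb]
      · refine ⟨b.val, by omega, ?_⟩
        rw [phi_eq T f hn (by omega)]
        have eb : (⟨b.val, by omega⟩ : Fin n) = b := Fin.ext rfl
        have ea : (⟨b.val + 1, by omega⟩ : Fin n) = a := Fin.ext h
        rw [eb, ea, Sym2.eq_swap]
  · rintro ⟨i, hi, rfl⟩
    rw [phi_eq T f hn hi, SimpleGraph.mem_edgeSet]
    exact f.map_adj_iff.mpr (SimpleGraph.pathGraph_adj.mpr (Or.inl rfl))

lemma phi_injOn (hn : 0 < n) :
    Set.InjOn (phi T f hn) (Finset.range (n - 1)) := by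
  intro i hi j hj hij
  simp only [Finset.coe_range, Set.mem_Iio] at hi hj
  rw [phi_eq T f hn hi, phi_eq T f hn hj] at hij
  rw [Sym2.eq_iff] at hij
  rcases hij with ⟨h1, h2⟩ | ⟨h1, h2⟩
  · have := congrArg Fin.val (f.injective h1)
    simpa using this
  · have e1 := congrArg Fin.val (f.injective h1)
    have e2 := congrArg Fin.val (f.injective h2)
    simp only at e1 e2
    omega

lemma edgeWeights_eq (hn : 0 < n) :
    T.edgeWeights = (Multiset.range (n - 1)).map (wseq T f) := by
  rw [WGraph.edgeWeights, edgeFinset_eq T f hn,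
    Finset.image_val_of_injOn (phi_injOn T f hn), Multiset.map_map]
  rw [show (Finset.range (n - 1)).val = Multiset.range (n - 1) from rfl]
  apply Multiset.map_congr rfl
  intro i hi
  rw [Multiset.mem_range] at hi
  have h1 : i + 1 < n := by omega
  simp only [Function.comp_apply]
  rw [phi_eq T f hn hi]
  rw [show T.ew s(f ⟨i, by omega⟩, f ⟨i + 1, by omega⟩)
      = T.w (f ⟨i, by omega⟩) (f ⟨i + 1, by omega⟩) from rfl]
  rw [wseq, dif_pos h1]

end PathSide

section Rearrange

lemma rearrange (c : ℕ → ℕ) (φ : ℕ → ℝ) (s : Finset ℕ) :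
    ∀ (u v : ℕ → ℝ),
      (∀ i ∈ s, ∀ j ∈ s, c i ≤ c j → u j ≤ u i) →
      (∀ i ∈ s, ∀ j ∈ s, c i ≤ c j → v j ≤ v i) →
      s.val.map u = s.val.map v →
      ∑ i ∈ s, φ (c i) / u i = ∑ i ∈ s, φ (c i) / v i := by
  induction s using Finset.strongInductionOn with
  | _ s ih =>
    intro u v hu hv huv
    rcases s.eq_empty_or_nonempty with rfl | hne
    · simp
    · obtain ⟨i₀, hi₀s, hmin⟩ := s.exists_min_image c hne
      have humax : ∀ j ∈ s, u j ≤ u i₀ := fun j hj => hu i₀ hi₀s j hj (hmin j hj)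
      have hvmax : ∀ j ∈ s, v j ≤ v i₀ := fun j hj => hv i₀ hi₀s j hj (hmin j hj)
      have hmem : u i₀ ∈ s.val.map v := by
        rw [← huv]
        exact Multiset.mem_map_of_mem u hi₀s
      obtain ⟨j, hjs, hj⟩ := Multiset.mem_map.mp hmem
      have h1 : u i₀ ≤ v i₀ := hj ▸ hvmax j hjs
      have hmem2 : v i₀ ∈ s.val.map u := by
        rw [huv]
        exact Multiset.mem_map_of_mem v hi₀s
      obtain ⟨k, hks, hk⟩ := Multiset.mem_map.mp hmem2
      have h2 : v i₀ ≤ u i₀ := hk ▸ humax k hks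
      have heq : u i₀ = v i₀ := le_antisymm h1 h2
      have hcons : i₀ ::ₘ (s.erase i₀).val = s.val := by
        rw [Finset.erase_val]
        exact Multiset.cons_erase hi₀s
      have huv' : (s.erase i₀).val.map u = (s.erase i₀).val.map v := by
        have h3 := huv
        rw [← hcons, Multiset.map_cons, Multiset.map_cons, heq] at h3
        exact (Multiset.cons_inj_right _).mp h3
      have hrec := ih (s.erase i₀) (Finset.erase_ssubset hi₀s) u v
        (fun i hi j hj hc => hu i (Finset.mem_of_mem_erase hi) j (Finset.mem_of_mem_erase hj) hc)
        (fun i hi j hj hc => hv i (Finset.mem_of_mem_erase hi) j (Finset.mem_of_mem_erase hj) hc)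
        huv'
      rw [← Finset.add_sum_erase s _ hi₀s, ← Finset.add_sum_erase s _ hi₀s, heq, hrec]

end Rearrange


theorem stmt17 (W : Multiset ℝ) (hW : ∀ x ∈ W, 0 < x) {n : ℕ}
    (T T' : WGraph n) (hT : T.G.IsTree) (hT' : T'.G.IsTree)
    (hw : T.edgeWeights = W) (hw' : T'.edgeWeights = W)
    (hp : IsPolarizedPath T) (hp' : IsPolarizedPath T') :
    sumInvEig T.lap = sumInvEig T'.lap := by
  rcases Nat.eq_zero_or_pos n with hn0 | hn
  · subst hn0
    have hz : ∀ M : Matrix (Fin 0) (Fin 0) ℝ, sumInvEig M = 0 := by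
      intro M
      rw [sumInvEig]
      split_ifs <;> simp
    rw [hz, hz]
  · obtain ⟨f, hpf⟩ := hp
    obtain ⟨f', hpf'⟩ := hp'
    have e1 : sumInvEig T.lap = (Gm T f).trace :=
      sumInvEig_eq_trace hn T.lap (Gm T f) (lap_isHermitian T) (lap_ker T f hn rfl)
        (lap_mulVec_one T) (lap_mul_Gm T f hn) (ones_mul_Gm T f hn)
    have e2 : sumInvEig T'.lap = (Gm T' f').trace :=
      sumInvEig_eq_trace hn T'.lap (Gm T' f') (lap_isHermitian T') (lap_ker T' f' hn rfl)
        (lap_mulVec_one T') (lap_mul_Gm T' f' hn) (ones_mul_Gm T' f' hn)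
    rw [e1, e2, trace_Gm T f hn, trace_Gm T' f' hn]
    have hfac : ∀ i ∈ Finset.range (n - 1),
        ((i : ℝ) + 1) * ((n - 1 - i : ℕ) : ℝ)
          = ((min (i + 1) (n - 1 - i) * (n - min (i + 1) (n - 1 - i)) : ℕ) : ℝ) := by
      intro i hi
      rw [Finset.mem_range] at hi
      have hnat : (i + 1) * (n - 1 - i)
          = min (i + 1) (n - 1 - i) * (n - min (i + 1) (n - 1 - i)) := by
        rcases Nat.le_total (i + 1) (n - 1 - i) with h | h
        · rw [Nat.min_eq_left h]
          congr 1
          omega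
        · rw [Nat.min_eq_right h, Nat.mul_comm]
          congr 1
          omega
      calc ((i : ℝ) + 1) * ((n - 1 - i : ℕ) : ℝ) = (((i + 1) * (n - 1 - i) : ℕ) : ℝ) := by
            push_cast
            ring
        _ = _ := congrArg _ hnat
    have hconv : ∀ w : ℕ → ℝ,
        ∑ i ∈ Finset.range (n - 1), ((i : ℝ) + 1) * ((n - 1 - i : ℕ) : ℝ) / ((n : ℝ) * w i)
          = ∑ i ∈ Finset.range (n - 1),
              (fun m => ((m * (n - m) : ℕ) : ℝ)) ((fun i => min (i + 1) (n - 1 - i)) i)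
                / ((fun i => (n : ℝ) * w i) i) := by
      intro w
      refine Finset.sum_congr rfl fun i hi => ?_
      rw [hfac i hi]
    rw [hconv (wseq T f), hconv (wseq T' f')]
    refine rearrange (fun i => min (i + 1) (n - 1 - i)) (fun m => ((m * (n - m) : ℕ) : ℝ))
      (Finset.range (n - 1)) (fun i => (n : ℝ) * wseq T f i) (fun i => (n : ℝ) * wseq T' f' i)
      ?_ ?_ ?_
    · intro i hi j hj hcij
      rw [Finset.mem_range] at hi hj
      have hi1 : i + 1 < n := by omega
      have hj1 : j + 1 < n := by omega
      have hle := hpf i j hi1 hj1 hcij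
      have hwi : wseq T f i = T.w (f ⟨i, by omega⟩) (f ⟨i + 1, hi1⟩) := dif_pos hi1
      have hwj : wseq T f j = T.w (f ⟨j, by omega⟩) (f ⟨j + 1, hj1⟩) := dif_pos hj1
      have hn0 : (0 : ℝ) ≤ (n : ℝ) := Nat.cast_nonneg n
      apply mul_le_mul_of_nonneg_left _ hn0
      rw [hwi, hwj]
      exact hle
    · intro i hi j hj hcij
      rw [Finset.mem_range] at hi hj
      have hi1 : i + 1 < n := by omega
      have hj1 : j + 1 < n := by omega
      have hle := hpf' i j hi1 hj1 hcij
      have hwi : wseq T' f' i = T'.w (f' ⟨i, by omega⟩) (f' ⟨i + 1, hi1⟩) := dif_pos hi1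
      have hwj : wseq T' f' j = T'.w (f' ⟨j, by omega⟩) (f' ⟨j + 1, hj1⟩) := dif_pos hj1
      have hn0 : (0 : ℝ) ≤ (n : ℝ) := Nat.cast_nonneg n
      apply mul_le_mul_of_nonneg_left _ hn0
      rw [hwi, hwj]
      exact hle
    · have hTm : (Multiset.range (n - 1)).map (wseq T f) = W := by
        rw [← edgeWeights_eq T f hn, hw]
      have hTm' : (Multiset.range (n - 1)).map (wseq T' f') = W := by
        rw [← edgeWeights_eq T' f' hn, hw']
      have hval : (Finset.range (n - 1)).val = Multiset.range (n - 1) := rfl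
      calc (Finset.range (n - 1)).val.map (fun i => (n : ℝ) * wseq T f i)
          = ((Multiset.range (n - 1)).map (wseq T f)).map (fun x => (n : ℝ) * x) := by
            rw [hval, Multiset.map_map]
            rfl
        _ = ((Multiset.range (n - 1)).map (wseq T' f')).map (fun x => (n : ℝ) * x) := by
            rw [hTm, hTm']
        _ = (Finset.range (n - 1)).val.map (fun i => (n : ℝ) * wseq T' f' i) := by
            rw [hval, Multiset.map_map]
            rfl
end
end

section
/- Let W be a finite multiset of positive reals with |W| ≥ 2. For every weighted tree T ∈ 𝒯_W whose underlying graph is not a star, the sum of the reciprocals of the nonzero eigenvalues of the combinatorial Laplacian of T is strictly greater than the corresponding sum for the weighted star S_W; likewise, the sum of the reciprocals of the nonzero eigenvalues of the normalized Laplacian of T is strictly greater than the corresponding sum for S_W. (This expresses that S_W is the unique element of 𝒯_W minimizing both the average hitting time α and the Kemeny's constant κ.) -/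
open scoped Classical

noncomputable section

section StarAuxProofs
open Matrix Finset

lemma sumInvEig_eq_trace_s18 {n : ℕ} (M X : Matrix (Fin n) (Fin n) ℝ)
    (hM : M.IsHermitian) (hMXM : M * X * M = M) (v : Fin n → ℝ)
    (hXv : X *ᵥ v = 0) (hker : ∀ x : Fin n → ℝ, M *ᵥ x = 0 → ∃ c : ℝ, x = c • v) :
    sumInvEig M = X.trace := by
  rw [sumInvEig, dif_pos hM]
  set U : Matrix (Fin n) (Fin n) ℝ := (hM.eigenvectorUnitary : Matrix (Fin n) (Fin n) ℝ) with hU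
  have h1 : star U * U = 1 := Matrix.mem_unitaryGroup_iff'.mp (hM.eigenvectorUnitary).2
  have h2 : U * star U = 1 := Matrix.mem_unitaryGroup_iff.mp (hM.eigenvectorUnitary).2
  have hMs : Mᵀ = M := by
    rw [← Matrix.conjTranspose_eq_transpose_of_trivial]; exact hM
  have hsymm : ∀ (y z : Fin n → ℝ), (M *ᵥ y) ⬝ᵥ z = y ⬝ᵥ (M *ᵥ z) := by
    intro y z
    conv_lhs => rw [← hMs, Matrix.mulVec_transpose]
    rw [dotProduct_mulVec]
  have htr : X.trace = (star U * X * U).trace := by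
    rw [Matrix.trace_mul_comm (star U * X) U, ← mul_assoc, h2, one_mul]
  rw [htr, Matrix.trace]
  apply Finset.sum_congr rfl
  intro j _
  have hu : M *ᵥ ⇑(hM.eigenvectorBasis j) = hM.eigenvalues j • ⇑(hM.eigenvectorBasis j) :=
    hM.mulVec_eigenvectorBasis j
  set u : Fin n → ℝ := ⇑(hM.eigenvectorBasis j) with hu'
  have hentry : (star U * X * U).diag j = u ⬝ᵥ (X *ᵥ u) := by
    simp only [Matrix.diag, Matrix.mul_apply, Matrix.star_apply, star_trivial,
      dotProduct, Matrix.mulVec, Finset.sum_mul, Finset.mul_sum]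
    rw [Finset.sum_comm]
    apply Finset.sum_congr rfl
    intro a _
    apply Finset.sum_congr rfl
    intro b _
    have e1 : U a j = u a := Matrix.IsHermitian.eigenvectorUnitary_apply hM a j
    have e2 : U b j = u b := Matrix.IsHermitian.eigenvectorUnitary_apply hM b j
    rw [e1, e2]; ring
  rw [hentry]
  by_cases h : hM.eigenvalues j = 0
  · rw [h, _root_.inv_zero]
    have : M *ᵥ u = 0 := by rw [hu, h, zero_smul]
    obtain ⟨c, hc⟩ := hker u this
    rw [hc, Matrix.mulVec_smul, hXv]
    simp
  · have hnorm : u ⬝ᵥ u = 1 := by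
      have hh := congrFun (congrFun h1 j) j
      simp only [Matrix.mul_apply, Matrix.star_apply, star_trivial, Matrix.one_apply_eq] at hh
      rw [← hh]
      apply Finset.sum_congr rfl
      intro a _
      rw [hU, Matrix.IsHermitian.eigenvectorUnitary_apply hM a j]
    have key : (M *ᵥ u) ⬝ᵥ (X *ᵥ (M *ᵥ u)) = u ⬝ᵥ (M *ᵥ u) := by
      rw [hsymm, Matrix.mulVec_mulVec, Matrix.mulVec_mulVec, hMXM]
    rw [hu] at key
    have hval : u ⬝ᵥ (hM.eigenvalues j • u) = hM.eigenvalues j := by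
      rw [dotProduct_smul, hnorm]; simp
    rw [smul_dotProduct, Matrix.mulVec_smul, dotProduct_smul, hval] at key
    have k2 : hM.eigenvalues j * (u ⬝ᵥ (X *ᵥ u)) = 1 := by
      apply mul_left_cancel₀ h
      rw [mul_one]
      simp only [smul_eq_mul] at key
      linear_combination key
    exact (eq_inv_of_mul_eq_one_right k2).symm


namespace StarAux
variable {n : ℕ}

lemma mk_out (e : Sym2 (Fin n)) : s(e.out.1, e.out.2) = e := by
  rw [Sym2.mk, Prod.mk.eta, e.out_eq]

lemma adj_out {G : SimpleGraph (Fin n)} {e : Sym2 (Fin n)} (he : e ∈ G.edgeSet) :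
    G.Adj e.out.1 e.out.2 := by
  rw [← SimpleGraph.mem_edgeSet, mk_out]; exact he

lemma mem_out_iff (e : Sym2 (Fin n)) (u : Fin n) : u ∈ e ↔ (u = e.out.1 ∨ u = e.out.2) := by
  conv_lhs => rw [← mk_out e]
  exact Sym2.mem_iff

lemma eq_of_mem_mem {e : Sym2 (Fin n)} {u v : Fin n} (hu : u ∈ e) (hv : v ∈ e) (hne : u ≠ v) :
    e = s(u, v) := by
  rw [mem_out_iff] at hu hv
  rcases hu with h1 | h1 <;> rcases hv with h2 | h2
  · exact absurd (h1.trans h2.symm) hne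
  · rw [← mk_out e, h1, h2]
  · rw [← mk_out e, h1, h2, Sym2.eq_swap]
  · exact absurd (h1.trans h2.symm) hne

lemma ew_out (T : WGraph n) (e : Sym2 (Fin n)) : T.ew e = T.w e.out.1 e.out.2 := by
  conv_lhs => rw [← mk_out e]
  rfl

/-- The side of the deleted edge `e` containing the first endpoint. -/
def sideP (G : SimpleGraph (Fin n)) (e : Sym2 (Fin n)) (u : Fin n) : Prop :=
  (G.deleteEdges {e}).Reachable e.out.1 u

def sideF (G : SimpleGraph (Fin n)) (e : Sym2 (Fin n)) : Finset (Fin n) :=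
  Finset.univ.filter (sideP G e)

lemma sideP_fst (G : SimpleGraph (Fin n)) (e : Sym2 (Fin n)) : sideP G e e.out.1 :=
  SimpleGraph.Reachable.refl _

lemma not_sideP_snd {G : SimpleGraph (Fin n)} (hac : G.IsAcyclic) {e : Sym2 (Fin n)}
    (he : e ∈ G.edgeSet) : ¬ sideP G e e.out.2 := by
  have key : ∀ a b, G.Adj a b → ¬(G.deleteEdges {s(a,b)}).Reachable a b := by
    intro a b hab
    have hb := (SimpleGraph.isAcyclic_iff_forall_edge_isBridge.mp hac)
      ((SimpleGraph.mem_edgeSet G).mpr hab)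
    rw [SimpleGraph.isBridge_iff] at hb
    exact hb
  intro hs
  exact key _ _ (adj_out he) (by rw [mk_out]; exact hs)

lemma sideP_iff_of_adj {G : SimpleGraph (Fin n)} {e : Sym2 (Fin n)} {u v : Fin n}
    (huv : G.Adj u v) (hne : s(u, v) ≠ e) : (sideP G e u ↔ sideP G e v) := by
  have hadj : (G.deleteEdges {e}).Adj u v := by
    rw [SimpleGraph.deleteEdges_adj]; exact ⟨huv, by simpa using hne⟩
  constructor
  · exact fun h => h.trans hadj.reachable
  · exact fun h => h.trans hadj.symm.reachable

lemma sideP_or {G : SimpleGraph (Fin n)} (hc : G.Connected) {e : Sym2 (Fin n)}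
    (he : e ∈ G.edgeSet) (u : Fin n) :
    sideP G e u ∨ (G.deleteEdges {e}).Reachable e.out.2 u := by
  obtain ⟨w⟩ := hc.preconnected e.out.1 u
  have key : ∀ (x u : Fin n), (G.Walk x u) →
      (sideP G e x ∨ (G.deleteEdges {e}).Reachable e.out.2 x) →
      (sideP G e u ∨ (G.deleteEdges {e}).Reachable e.out.2 u) := by
    intro x u w
    induction w with
    | nil => exact id
    | cons h p ih =>
      rename_i xx yy zz
      intro hx
      apply ih
      by_cases hne : s(xx, yy) = e
      · have : yy = e.out.1 ∨ yy = e.out.2 := by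
          have h2 : yy ∈ e := by rw [← hne]; exact Sym2.mem_mk_right _ _
          rw [← mk_out e] at h2; exact Sym2.mem_iff.mp h2
        rcases this with h1 | h1
        · exact Or.inl (h1 ▸ sideP_fst G e)
        · exact Or.inr (h1 ▸ SimpleGraph.Reachable.refl _)
      · have hadj : (G.deleteEdges {e}).Adj xx yy := by
          rw [SimpleGraph.deleteEdges_adj]; exact ⟨h, by simpa using hne⟩
        rcases hx with h1 | h1
        · exact Or.inl (h1.trans hadj.reachable)
        · exact Or.inr (h1.trans hadj.reachable)
  exact key _ _ w (Or.inl (sideP_fst G e))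

lemma not_sideP_iff {G : SimpleGraph (Fin n)} (hT : G.IsTree) {e : Sym2 (Fin n)}
    (he : e ∈ G.edgeSet) (u : Fin n) :
    ¬ sideP G e u ↔ (G.deleteEdges {e}).Reachable e.out.2 u := by
  constructor
  · intro h; rcases sideP_or hT.isConnected he u with h1 | h1
    · exact absurd h1 h
    · exact h1
  · intro h hs
    exact not_sideP_snd hT.IsAcyclic he (hs.trans h.symm)


def ind (e : Sym2 (Fin n)) : Fin n → ℝ :=
  fun u => (if u = e.out.1 then (1:ℝ) else 0) - (if u = e.out.2 then 1 else 0)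

lemma ind_sq {G : SimpleGraph (Fin n)} {e : Sym2 (Fin n)} (he : e ∈ G.edgeSet) (u : Fin n) :
    ind e u * ind e u = if u ∈ e then 1 else 0 := by
  have hab : e.out.1 ≠ e.out.2 := (adj_out he).ne
  simp only [mem_out_iff]
  by_cases h1 : u = e.out.1 <;> by_cases h2 : u = e.out.2 <;>
    simp [ind, h1, h2, hab, hab.symm, Ne.symm hab] <;> tauto

lemma mem_of_ind_ne_zero {e : Sym2 (Fin n)} {u : Fin n} (h : ind e u ≠ 0) : u ∈ e := by
  rw [mem_out_iff]
  by_contra hc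
  push_neg at hc
  simp [ind, hc.1, hc.2] at h

lemma lap_mulVec (T : WGraph n) (c : Fin n → ℝ) (u : Fin n) :
    (T.lap *ᵥ c) u = ∑ v, T.w u v * (c u - c v) := by
  have l1 : (T.lap *ᵥ c) u = ∑ v, ((if u = v then T.deg u else 0) - T.w u v) * c v := rfl
  rw [l1]
  have l2 : ∀ v : Fin n, ((if u = v then T.deg u else 0) - T.w u v) * c v
      = (if u = v then T.deg u * c v else 0) - T.w u v * c v := by
    intro v; by_cases h : u = v <;> simp [h] <;> ring
  simp only [l2, Finset.sum_sub_distrib, Finset.sum_ite_eq, Finset.mem_univ, if_true]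
  have l3 : ∀ v : Fin n, T.w u v * (c u - c v) = T.w u v * c u - T.w u v * c v := by
    intro v; ring
  simp only [l3, Finset.sum_sub_distrib, ← Finset.sum_mul, WGraph.deg]

lemma lap_mulVec_side (T : WGraph n) (hT : T.G.IsTree) {e : Sym2 (Fin n)}
    (he : e ∈ T.G.edgeSet) (x y : ℝ) (hxy : x - y = 1) :
    T.lap *ᵥ (fun u => if sideP T.G e u then x else y) = T.ew e • ind e := by
  have hab : e.out.1 ≠ e.out.2 := (adj_out he).ne
  set c : Fin n → ℝ := fun u => if sideP T.G e u then x else y with hc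
  have hca : c e.out.1 = x := by rw [hc]; simp [sideP_fst T.G e]
  have hcb : c e.out.2 = y := by rw [hc]; simp [not_sideP_snd hT.IsAcyclic he]
  have hsame : ∀ u v : Fin n, T.G.Adj u v → s(u, v) ≠ e → c u = c v := by
    intro u v huv hne
    have hiff := sideP_iff_of_adj huv hne
    rw [hc]
    by_cases h : sideP T.G e u
    · simp only [if_pos h, if_pos (hiff.mp h)]
    · simp only [if_neg h, if_neg (fun hh => h (hiff.mpr hh))]
  have hzero : ∀ u v : Fin n, (u ≠ e.out.1 ∨ v ≠ e.out.2) → (u ≠ e.out.2 ∨ v ≠ e.out.1) →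
      T.w u v * (c u - c v) = 0 := by
    intro u v h1 h2
    by_cases hadj : T.G.Adj u v
    · by_cases hne : s(u, v) = e
      · exfalso
        rw [← mk_out e] at hne
        rcases Sym2.eq_iff.mp hne with ⟨ha', hb'⟩ | ⟨ha', hb'⟩
        · tauto
        · tauto
      · rw [hsame u v hadj hne, sub_self, mul_zero]
    · rw [T.zero u v hadj, zero_mul]
  funext u
  rw [lap_mulVec]
  by_cases hu1 : u = e.out.1
  · rw [Finset.sum_eq_single e.out.2]
    · rw [hu1, hca, hcb, hxy, mul_one, Pi.smul_apply, ind, ew_out]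
      simp [hab, smul_eq_mul]
    · intro v _ hv
      exact hzero u v (Or.inr hv) (Or.inl (by rw [hu1]; exact hab))
    · intro h; exact absurd (Finset.mem_univ e.out.2) h
  · by_cases hu2 : u = e.out.2
    · rw [Finset.sum_eq_single e.out.1]
      · rw [hu2, hca, hcb, Pi.smul_apply, ind, ew_out]
        have hyx : y - x = -1 := by linarith
        rw [hyx]
        simp [hab, Ne.symm hab, smul_eq_mul, T.symm e.out.2 e.out.1]
      · intro v _ hv
        exact hzero u v (Or.inl hu1) (Or.inr hv)
      · intro h; exact absurd (Finset.mem_univ e.out.1) h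
    · rw [Finset.sum_eq_zero, Pi.smul_apply, ind]
      · simp [hu1, hu2]
      · intro v _
        exact hzero u v (Or.inl hu1) (Or.inl hu2)

lemma sum_edge_inc (T : WGraph n) (u : Fin n) :
    ∑ e ∈ T.G.edgeFinset, (if u ∈ e then T.ew e else 0) = T.deg u := by
  rw [Finset.sum_ite, Finset.sum_const_zero, add_zero, WGraph.deg]
  rw [← Finset.sum_subset (Finset.filter_subset (fun v => T.G.Adj u v) Finset.univ)
    (fun v _ hv => T.zero u v (by simpa using hv))]
  symm
  apply Finset.sum_bij (i := fun v _ => s(u, v))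
  · intro v hv
    simp only [Finset.mem_filter] at hv ⊢
    exact ⟨SimpleGraph.mem_edgeFinset.mpr ((T.G.mem_edgeSet).mpr hv.2), Sym2.mem_mk_left u v⟩
  · intro v1 h1 v2 h2 hh
    exact Sym2.congr_right.mp hh
  · intro e hee
    simp only [Finset.mem_filter] at hee
    obtain ⟨y, hy⟩ := (Sym2.mem_iff_exists.mp hee.2)
    refine ⟨y, ?_, hy.symm⟩
    simp only [Finset.mem_filter, Finset.mem_univ, true_and]
    have : e ∈ T.G.edgeSet := SimpleGraph.mem_edgeFinset.mp hee.1
    rw [hy] at this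
    exact (SimpleGraph.mem_edgeSet T.G).mp this
  · intro v hv
    simp [WGraph.ew]

lemma lap_symm (T : WGraph n) (u v : Fin n) : T.lap u v = T.lap v u := by
  by_cases h : u = v
  · rw [h]
  · simp [WGraph.lap, h, Ne.symm h, T.symm u v]

lemma lap_eq_sum_ind (T : WGraph n) (u v : Fin n) :
    T.lap u v = ∑ e ∈ T.G.edgeFinset, T.ew e * (ind e u * ind e v) := by
  by_cases huv : u = v
  · subst huv
    have hc : ∀ e ∈ T.G.edgeFinset, T.ew e * (ind e u * ind e u)
        = if u ∈ e then T.ew e else 0 := by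
      intro e he
      rw [ind_sq (SimpleGraph.mem_edgeFinset.mp he)]
      by_cases h : u ∈ e <;> simp [h]
    rw [Finset.sum_congr rfl hc, sum_edge_inc]
    have hwuu : T.w u u = 0 := T.zero u u T.G.irrefl
    simp [WGraph.lap, hwuu]
  · by_cases hadj : T.G.Adj u v
    · rw [Finset.sum_eq_single_of_mem s(u,v)
        (SimpleGraph.mem_edgeFinset.mpr ((T.G.mem_edgeSet).mpr hadj))]
      · have hlap : T.lap u v = -(T.w u v) := by simp [WGraph.lap, huv]
        have hcase := Sym2.eq_iff.mp (mk_out s(u,v))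
        have hew : T.ew s(u,v) = T.w u v := rfl
        rcases hcase with ⟨h1, h2⟩ | ⟨h1, h2⟩ <;>
          · rw [hlap, ind, ind, hew]
            simp [h1, h2, huv, Ne.symm huv] <;> ring
      · intro e _ hne
        by_cases h1 : ind e u = 0
        · rw [h1]; ring
        · by_cases h2 : ind e v = 0
          · rw [h2]; ring
          · exact absurd (eq_of_mem_mem (mem_of_ind_ne_zero h1) (mem_of_ind_ne_zero h2) huv) hne
    · have h0 : T.lap u v = 0 := by simp [WGraph.lap, huv, T.zero u v hadj]
      rw [h0, eq_comm]
      apply Finset.sum_eq_zero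
      intro e he
      by_cases h1 : ind e u = 0
      · rw [h1]; ring
      · by_cases h2 : ind e v = 0
        · rw [h2]; ring
        · exfalso
          have hee := eq_of_mem_mem (mem_of_ind_ne_zero h1) (mem_of_ind_ne_zero h2) huv
          rw [hee] at he
          exact hadj ((T.G.mem_edgeSet).mp (SimpleGraph.mem_edgeFinset.mp he))

lemma ew_pos (T : WGraph n) {e : Sym2 (Fin n)} (he : e ∈ T.G.edgeFinset) : 0 < T.ew e := by
  rw [ew_out]
  exact T.pos _ _ (adj_out (SimpleGraph.mem_edgeFinset.mp he))

/-! ### The generalized Laplacian machinery -/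

def mfun (r : Fin n → ℝ) (u : Fin n) : ℝ := ((r u)⁻¹)^2
def nuVal (r : Fin n → ℝ) : ℝ := ∑ u, mfun r u
def sVal (G : SimpleGraph (Fin n)) (r : Fin n → ℝ) (e : Sym2 (Fin n)) : ℝ :=
  ∑ u ∈ sideF G e, mfun r u
def cfun (G : SimpleGraph (Fin n)) (r : Fin n → ℝ) (e : Sym2 (Fin n)) : Fin n → ℝ :=
  fun u => if sideP G e u then (nuVal r - sVal G r e)/(nuVal r) else -(sVal G r e)/(nuVal r)
def pvec (G : SimpleGraph (Fin n)) (r : Fin n → ℝ) (e : Sym2 (Fin n)) : Fin n → ℝ :=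
  fun u => (r u)⁻¹ * cfun G r e u
def bvec (r : Fin n → ℝ) (e : Sym2 (Fin n)) : Fin n → ℝ := fun u => r u * ind e u
def Mmat (T : WGraph n) (r : Fin n → ℝ) : Matrix (Fin n) (Fin n) ℝ :=
  Matrix.of fun u v => r u * T.lap u v * r v
def Xmat (T : WGraph n) (r : Fin n → ℝ) : Matrix (Fin n) (Fin n) ℝ :=
  ∑ e ∈ T.G.edgeFinset, (T.ew e)⁻¹ • Matrix.vecMulVec (pvec T.G r e) (pvec T.G r e)

variable {T : WGraph n} {r : Fin n → ℝ}

lemma mfun_pos (hr : ∀ u, 0 < r u) (u : Fin n) : 0 < mfun r u :=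
  pow_pos (inv_pos.mpr (hr u)) 2

lemma nu_pos (hr : ∀ u, 0 < r u) (hn : 0 < n) : 0 < nuVal r := by
  have hne : Nonempty (Fin n) := Fin.pos_iff_nonempty.mp hn
  exact Finset.sum_pos (fun u _ => mfun_pos hr u) Finset.univ_nonempty

lemma sum_filter_not_mfun (G : SimpleGraph (Fin n)) (e : Sym2 (Fin n)) :
    ∑ u ∈ Finset.univ.filter (fun u => ¬ sideP G e u), mfun r u = nuVal r - sVal G r e := by
  have := Finset.sum_filter_add_sum_filter_not Finset.univ (sideP G e) (mfun r)
  rw [nuVal, ← this, sVal, sideF]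
  ring



lemma M_mulVec_pvec (hT : T.G.IsTree) (hr : ∀ u, 0 < r u) (hn : 0 < n) {e : Sym2 (Fin n)}
    (he : e ∈ T.G.edgeFinset) :
    Mmat T r *ᵥ pvec T.G r e = T.ew e • bvec r e := by
  have hnu : nuVal r ≠ 0 := ne_of_gt (nu_pos hr hn)
  have hside := lap_mulVec_side T hT (SimpleGraph.mem_edgeFinset.mp he)
    ((nuVal r - sVal T.G r e)/(nuVal r)) (-(sVal T.G r e)/(nuVal r)) (by field_simp; ring)
  funext u
  have hstep : ∀ v, Mmat T r u v * pvec T.G r e v = r u * (T.lap u v * cfun T.G r e v) := by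
    intro v
    have hrv : r v ≠ 0 := ne_of_gt (hr v)
    rw [Mmat, Matrix.of_apply, pvec]
    field_simp
  show ∑ v, Mmat T r u v * pvec T.G r e v = _
  rw [Finset.sum_congr rfl (fun v _ => hstep v), ← Finset.mul_sum]
  have : ∑ v, T.lap u v * cfun T.G r e v = (T.lap *ᵥ cfun T.G r e) u := rfl
  rw [this]
  have hcfun : cfun T.G r e = fun u => if sideP T.G e u then
      (nuVal r - sVal T.G r e)/(nuVal r) else -(sVal T.G r e)/(nuVal r) := rfl
  rw [hcfun, hside]
  simp only [Pi.smul_apply, smul_eq_mul, bvec]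
  ring

lemma mul_vecMulVec (M : Matrix (Fin n) (Fin n) ℝ) (a b : Fin n → ℝ) :
    M * Matrix.vecMulVec a b = Matrix.vecMulVec (M *ᵥ a) b := by
  ext u v
  simp only [Matrix.mul_apply, Matrix.vecMulVec_apply, Matrix.mulVec, dotProduct,
    Finset.sum_mul]
  exact Finset.sum_congr rfl (fun k _ => by ring)

lemma vecMulVec_mul (a b : Fin n → ℝ) (M : Matrix (Fin n) (Fin n) ℝ) :
    Matrix.vecMulVec a b * M = Matrix.vecMulVec a (Mᵀ *ᵥ b) := by
  ext u v
  simp only [Matrix.mul_apply, Matrix.vecMulVec_apply, Matrix.mulVec, dotProduct,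
    Matrix.transpose_apply, Finset.mul_sum]
  exact Finset.sum_congr rfl (fun k _ => by ring)

lemma vecMulVec_mulVec (a b x : Fin n → ℝ) :
    Matrix.vecMulVec a b *ᵥ x = (b ⬝ᵥ x) • a := by
  funext u
  simp only [Matrix.mulVec, dotProduct, Matrix.vecMulVec_apply, Pi.smul_apply,
    smul_eq_mul, Finset.sum_mul]
  exact Finset.sum_congr rfl (fun k _ => by ring)

lemma M_transpose (T : WGraph n) (r : Fin n → ℝ) : (Mmat T r)ᵀ = Mmat T r := by
  ext u v
  rw [Matrix.transpose_apply, Mmat, Matrix.of_apply, Matrix.of_apply, lap_symm]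
  ring

lemma M_eq_sum_bvec (T : WGraph n) (r : Fin n → ℝ) :
    Mmat T r = ∑ e ∈ T.G.edgeFinset, T.ew e • Matrix.vecMulVec (bvec r e) (bvec r e) := by
  ext u v
  rw [Matrix.sum_apply]
  simp only [Matrix.smul_apply, Matrix.vecMulVec_apply, smul_eq_mul, bvec]
  rw [Mmat, Matrix.of_apply, lap_eq_sum_ind, Finset.mul_sum, Finset.sum_mul]
  exact Finset.sum_congr rfl (fun e _ => by ring)

lemma M_isHermitian (T : WGraph n) (r : Fin n → ℝ) : (Mmat T r).IsHermitian := by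
  rw [Matrix.IsHermitian, Matrix.conjTranspose_eq_transpose_of_trivial]
  exact M_transpose T r

lemma MXM (hT : T.G.IsTree) (hr : ∀ u, 0 < r u) (hn : 0 < n) :
    Mmat T r * Xmat T r * Mmat T r = Mmat T r := by
  conv_rhs => rw [M_eq_sum_bvec T r]
  rw [Xmat, Finset.mul_sum, Finset.sum_mul]
  apply Finset.sum_congr rfl
  intro e he
  have hew : T.ew e ≠ 0 := ne_of_gt (ew_pos T he)
  rw [Matrix.mul_smul, Matrix.smul_mul, mul_vecMulVec, vecMulVec_mul, M_transpose,
    M_mulVec_pvec hT hr hn he]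
  ext u v
  simp only [Matrix.smul_apply, Matrix.vecMulVec_apply, Pi.smul_apply, smul_eq_mul]
  field_simp

lemma sum_mulVec' {ι : Type*} (s : Finset ι) (f : ι → Matrix (Fin n) (Fin n) ℝ)
    (x : Fin n → ℝ) : (∑ e ∈ s, f e) *ᵥ x = ∑ e ∈ s, f e *ᵥ x := by
  funext u
  simp only [Matrix.mulVec, dotProduct, Matrix.sum_apply, Finset.sum_apply,
    Finset.sum_mul]
  exact Finset.sum_comm

lemma dot_sum {ι : Type*} (s : Finset ι) (x : Fin n → ℝ) (y : ι → Fin n → ℝ) :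
    x ⬝ᵥ (∑ e ∈ s, y e) = ∑ e ∈ s, x ⬝ᵥ y e := by
  simp only [dotProduct, Finset.sum_apply, Finset.mul_sum]
  exact Finset.sum_comm

lemma sum_ind_mul (e : Sym2 (Fin n)) (f : Fin n → ℝ) :
    ∑ u, ind e u * f u = f e.out.1 - f e.out.2 := by
  simp only [ind, sub_mul, Finset.sum_sub_distrib, ite_mul, one_mul, zero_mul,
    Finset.sum_ite_eq', Finset.mem_univ, if_true]

lemma sum_m_cfun (hr : ∀ u, 0 < r u) (hn : 0 < n) (G : SimpleGraph (Fin n))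
    (e : Sym2 (Fin n)) : ∑ u, mfun r u * cfun G r e u = 0 := by
  have hnu : nuVal r ≠ 0 := ne_of_gt (nu_pos hr hn)
  rw [← Finset.sum_filter_add_sum_filter_not Finset.univ (sideP G e)]
  have h1 : ∀ u ∈ Finset.univ.filter (sideP G e), mfun r u * cfun G r e u
      = mfun r u * ((nuVal r - sVal G r e)/(nuVal r)) := by
    intro u hu
    rw [cfun, if_pos (Finset.mem_filter.mp hu).2]
  have h2 : ∀ u ∈ Finset.univ.filter (fun u => ¬ sideP G e u), mfun r u * cfun G r e u
      = mfun r u * (-(sVal G r e)/(nuVal r)) := by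
    intro u hu
    rw [cfun, if_neg (Finset.mem_filter.mp hu).2]
  rw [Finset.sum_congr rfl h1, Finset.sum_congr rfl h2, ← Finset.sum_mul, ← Finset.sum_mul,
    sum_filter_not_mfun]
  have hs : ∑ u ∈ Finset.univ.filter (sideP G e), mfun r u = sVal G r e := rfl
  rw [hs]
  field_simp
  ring

lemma pvec_dot_inv (hr : ∀ u, 0 < r u) (hn : 0 < n) (G : SimpleGraph (Fin n))
    (e : Sym2 (Fin n)) : pvec G r e ⬝ᵥ (fun u => (r u)⁻¹) = 0 := by
  have : ∀ u, pvec G r e u * (r u)⁻¹ = mfun r u * cfun G r e u := by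
    intro u; rw [pvec, mfun]; ring
  rw [dotProduct]
  simp only [this]
  exact sum_m_cfun hr hn G e

lemma X_ker (hr : ∀ u, 0 < r u) (hn : 0 < n) :
    Xmat T r *ᵥ (fun u => (r u)⁻¹) = 0 := by
  rw [Xmat, sum_mulVec']
  apply Finset.sum_eq_zero
  intro e he
  rw [Matrix.smul_mulVec, vecMulVec_mulVec, pvec_dot_inv hr hn, zero_smul, smul_zero]

lemma M_ker (hT : T.G.IsTree) (hr : ∀ u, 0 < r u) (hn : 0 < n) :
    ∀ x : Fin n → ℝ, Mmat T r *ᵥ x = 0 → ∃ c : ℝ, x = c • (fun u => (r u)⁻¹) := by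
  intro x hx
  have hq : 0 = ∑ e ∈ T.G.edgeFinset, T.ew e * (bvec r e ⬝ᵥ x)^2 := by
    have h1 : x ⬝ᵥ (Mmat T r *ᵥ x) = 0 := by rw [hx, dotProduct_zero]
    rw [← h1, M_eq_sum_bvec T r, sum_mulVec', dot_sum]
    apply Finset.sum_congr rfl
    intro e he
    rw [Matrix.smul_mulVec, vecMulVec_mulVec]
    rw [dotProduct_smul, dotProduct_smul]
    rw [dotProduct_comm x (bvec r e)]
    simp only [smul_eq_mul]
    ring
  have hterm : ∀ e ∈ T.G.edgeFinset, T.ew e * (bvec r e ⬝ᵥ x)^2 = 0 := by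
    rw [eq_comm] at hq
    intro e he
    have := (Finset.sum_eq_zero_iff_of_nonneg
      (fun e he => mul_nonneg (le_of_lt (ew_pos T he)) (sq_nonneg _))).mp hq
    exact this e he
  have hedge : ∀ e ∈ T.G.edgeFinset, r e.out.1 * x e.out.1 = r e.out.2 * x e.out.2 := by
    intro e he
    have hew : T.ew e ≠ 0 := ne_of_gt (ew_pos T he)
    have h2 : (bvec r e ⬝ᵥ x)^2 = 0 := by
      rcases mul_eq_zero.mp (hterm e he) with h | h
      · exact absurd h hew
      · exact h
    have h3 : bvec r e ⬝ᵥ x = 0 := by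
      exact pow_eq_zero_iff (by norm_num) |>.mp h2
    have h4 : bvec r e ⬝ᵥ x = r e.out.1 * x e.out.1 - r e.out.2 * x e.out.2 := by
      rw [dotProduct]
      have : ∀ u, bvec r e u * x u = ind e u * (r u * x u) := by
        intro u; rw [bvec]; ring
      simp only [this]
      rw [sum_ind_mul]
    rw [h4] at h3
    linarith
  have hadjy : ∀ u v : Fin n, T.G.Adj u v → r u * x u = r v * x v := by
    intro u v huv
    have he : s(u,v) ∈ T.G.edgeFinset :=
      SimpleGraph.mem_edgeFinset.mpr ((T.G.mem_edgeSet).mpr huv)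
    have h5 := hedge _ he
    rcases Sym2.eq_iff.mp (mk_out s(u,v)) with ⟨h1,h2⟩ | ⟨h1,h2⟩
    · rw [h1, h2] at h5; exact h5
    · rw [h1, h2] at h5; exact h5.symm
  have hne : Nonempty (Fin n) := Fin.pos_iff_nonempty.mp hn
  set v0 := Classical.arbitrary (Fin n) with hv0
  have hwalk : ∀ (u w : Fin n) (p : T.G.Walk u w), r u * x u = r w * x w := by
    intro u w p
    induction p with
    | nil => rfl
    | cons h p ih => exact (hadjy _ _ h).trans ih
  refine ⟨r v0 * x v0, funext fun u => ?_⟩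
  obtain ⟨p⟩ := hT.isConnected.preconnected u v0
  have h6 := hwalk u v0 p
  have hru : r u ≠ 0 := ne_of_gt (hr u)
  simp only [Pi.smul_apply, smul_eq_mul]
  field_simp
  linarith [h6]

lemma X_trace (hr : ∀ u, 0 < r u) (hn : 0 < n) :
    (Xmat T r).trace = ∑ e ∈ T.G.edgeFinset,
      (sVal T.G r e * (nuVal r - sVal T.G r e)) / (nuVal r * T.ew e) := by
  rw [Xmat, Matrix.trace_sum]
  apply Finset.sum_congr rfl
  intro e he
  have hnu : nuVal r ≠ 0 := ne_of_gt (nu_pos hr hn)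
  have hew : T.ew e ≠ 0 := ne_of_gt (ew_pos T he)
  rw [Matrix.trace_smul]
  have htr : (Matrix.vecMulVec (pvec T.G r e) (pvec T.G r e)).trace
      = ∑ u, mfun r u * (cfun T.G r e u)^2 := by
    rw [Matrix.trace]
    apply Finset.sum_congr rfl
    intro u _
    rw [Matrix.diag]
    simp only [Matrix.vecMulVec_apply, pvec, mfun]
    ring
  rw [htr, ← Finset.sum_filter_add_sum_filter_not Finset.univ (sideP T.G e)]
  have h1 : ∀ u ∈ Finset.univ.filter (sideP T.G e), mfun r u * (cfun T.G r e u)^2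
      = mfun r u * (((nuVal r - sVal T.G r e)/(nuVal r))^2) := by
    intro u hu
    rw [cfun, if_pos (Finset.mem_filter.mp hu).2]
  have h2 : ∀ u ∈ Finset.univ.filter (fun u => ¬ sideP T.G e u), mfun r u * (cfun T.G r e u)^2
      = mfun r u * ((-(sVal T.G r e)/(nuVal r))^2) := by
    intro u hu
    rw [cfun, if_neg (Finset.mem_filter.mp hu).2]
  rw [Finset.sum_congr rfl h1, Finset.sum_congr rfl h2, ← Finset.sum_mul, ← Finset.sum_mul,
    sum_filter_not_mfun]
  have hs : ∑ u ∈ Finset.univ.filter (sideP T.G e), mfun r u = sVal T.G r e := rfl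
  rw [hs, smul_eq_mul]
  field_simp
  ring

theorem master (hT : T.G.IsTree) (hr : ∀ u, 0 < r u) (hn : 0 < n) :
    sumInvEig (Mmat T r) = ∑ e ∈ T.G.edgeFinset,
      (sVal T.G r e * (nuVal r - sVal T.G r e)) / (nuVal r * T.ew e) := by
  rw [sumInvEig_eq_trace_s18 (Mmat T r) (Xmat T r) (M_isHermitian T r) (MXM hT hr hn)
    (fun u => (r u)⁻¹) (X_ker hr hn) (M_ker hT hr hn), X_trace hr hn]


/-! ### Specializations and side bounds -/

lemma w_nonneg (T : WGraph n) (u v : Fin n) : 0 ≤ T.w u v := by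
  by_cases h : T.G.Adj u v
  · exact le_of_lt (T.pos u v h)
  · rw [T.zero u v h]

lemma lap_eq_Mmat (T : WGraph n) : T.lap = Mmat T (fun _ => 1) := by
  ext u v
  simp [Mmat]

lemma exists_adj {G : SimpleGraph (Fin n)} (hc : G.Connected) (hn : 2 ≤ n) (u : Fin n) :
    ∃ z, G.Adj u z := by
  have : Nontrivial (Fin n) := Fin.nontrivial_iff_two_le.mpr hn
  obtain ⟨v, hv⟩ := exists_ne u
  obtain ⟨p⟩ := hc.preconnected u v
  cases p with
  | nil => exact absurd rfl hv
  | cons h p => exact ⟨_, h⟩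

lemma deg_pos {T : WGraph n} (hT : T.G.IsTree) (hn : 2 ≤ n) (u : Fin n) : 0 < T.deg u := by
  obtain ⟨z, hz⟩ := exists_adj hT.isConnected hn u
  rw [WGraph.deg]
  apply Finset.sum_pos' (fun v _ => w_nonneg T u v)
  exact ⟨z, Finset.mem_univ z, T.pos u z hz⟩

lemma nlap_eq_Mmat (T : WGraph n) :
    T.nlap = Mmat T (fun u => (Real.sqrt (T.deg u))⁻¹) := by
  ext u v
  simp only [WGraph.nlap, Mmat, Matrix.of_apply]
  rw [div_eq_mul_inv, mul_inv]
  ring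

lemma mfun_one : mfun (fun _ : Fin n => (1:ℝ)) = fun _ => 1 := by
  funext u; simp [mfun]

lemma nu_one : nuVal (fun _ : Fin n => (1:ℝ)) = n := by
  simp [nuVal, mfun]

lemma sVal_one (G : SimpleGraph (Fin n)) (e : Sym2 (Fin n)) :
    sVal G (fun _ => 1) e = (sideF G e).card := by
  simp [sVal, mfun]

lemma mfun_sqrtdeg {T : WGraph n} (hd : ∀ u, 0 < T.deg u) :
    mfun (fun u => (Real.sqrt (T.deg u))⁻¹) = T.deg := by
  funext u
  rw [mfun, inv_inv]
  exact Real.sq_sqrt (le_of_lt (hd u))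

lemma nu_sqrtdeg {T : WGraph n} (hd : ∀ u, 0 < T.deg u) :
    nuVal (fun u => (Real.sqrt (T.deg u))⁻¹) = T.vol := by
  rw [nuVal, mfun_sqrtdeg hd, WGraph.vol]

lemma mem_sideF_fst (G : SimpleGraph (Fin n)) (e : Sym2 (Fin n)) : e.out.1 ∈ sideF G e :=
  Finset.mem_filter.mpr ⟨Finset.mem_univ _, sideP_fst G e⟩

lemma not_mem_sideF_snd {G : SimpleGraph (Fin n)} (hT : G.IsTree) {e : Sym2 (Fin n)}
    (he : e ∈ G.edgeSet) : e.out.2 ∉ sideF G e := by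
  rw [sideF, Finset.mem_filter]
  exact fun h => not_sideP_snd hT.IsAcyclic he h.2

lemma neighbor_in_sideF {G : SimpleGraph (Fin n)} {e : Sym2 (Fin n)} {z : Fin n}
    (hz : G.Adj e.out.1 z) (hne : z ≠ e.out.2) : z ∈ sideF G e := by
  rw [sideF, Finset.mem_filter]
  refine ⟨Finset.mem_univ _, ?_⟩
  have hnee : s(e.out.1, z) ≠ e := by
    intro hc
    exact hne (Sym2.congr_right.mp (hc.trans (mk_out e).symm))
  exact ((G.deleteEdges_adj).mpr ⟨hz, by simpa using hnee⟩).reachable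

lemma neighbor_not_in_sideF {G : SimpleGraph (Fin n)} (hT : G.IsTree) {e : Sym2 (Fin n)}
    (he : e ∈ G.edgeSet) {z : Fin n} (hz : G.Adj e.out.2 z) (hne : z ≠ e.out.1) :
    z ∉ sideF G e := by
  rw [sideF, Finset.mem_filter]
  rintro ⟨-, hs⟩
  have hnee : s(e.out.2, z) ≠ e := by
    intro hc
    rcases Sym2.eq_iff.mp (hc.trans (mk_out e).symm) with ⟨h1, h2⟩ | ⟨h1, h2⟩
    · exact (adj_out he).ne h1.symm
    · exact hne h2
  have hreach : (G.deleteEdges {e}).Reachable e.out.2 z :=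
    ((G.deleteEdges_adj).mpr ⟨hz, by simpa using hnee⟩).reachable
  exact ((not_sideP_iff hT he z).mpr hreach) hs

lemma sVal_ge_fst {G : SimpleGraph (Fin n)} (r : Fin n → ℝ) (hr : ∀ u, 0 < r u)
    (e : Sym2 (Fin n)) : mfun r e.out.1 ≤ sVal G r e :=
  Finset.single_le_sum (fun u _ => le_of_lt (mfun_pos hr u)) (mem_sideF_fst G e)

lemma sVal_le {G : SimpleGraph (Fin n)} (hT : G.IsTree) {e : Sym2 (Fin n)}
    (he : e ∈ G.edgeSet) (r : Fin n → ℝ) (hr : ∀ u, 0 < r u) :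
    sVal G r e ≤ nuVal r - mfun r e.out.2 := by
  have hsub : sideF G e ⊆ Finset.univ.erase e.out.2 := by
    intro u hu
    rw [Finset.mem_erase]
    exact ⟨fun hc => not_mem_sideF_snd hT he (hc ▸ hu), Finset.mem_univ u⟩
  have h1 : sVal G r e ≤ ∑ u ∈ Finset.univ.erase e.out.2, mfun r u :=
    Finset.sum_le_sum_of_subset_of_nonneg hsub (fun u _ _ => le_of_lt (mfun_pos hr u))
  rwa [Finset.sum_erase_eq_sub (Finset.mem_univ _)] at h1

lemma sVal_ge_two {G : SimpleGraph (Fin n)} (r : Fin n → ℝ) (hr : ∀ u, 0 < r u)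
    {e : Sym2 (Fin n)} {z : Fin n} (hz : G.Adj e.out.1 z) (hne : z ≠ e.out.2) :
    mfun r e.out.1 + mfun r z ≤ sVal G r e := by
  have hza : z ≠ e.out.1 := fun hc => G.irrefl (hc ▸ hz)
  have hsub : insert e.out.1 {z} ⊆ sideF G e := by
    intro u hu
    rcases Finset.mem_insert.mp hu with rfl | hu
    · exact mem_sideF_fst G e
    · rw [Finset.mem_singleton] at hu
      exact hu ▸ neighbor_in_sideF hz hne
  have := Finset.sum_le_sum_of_subset_of_nonneg hsub
    (fun u _ _ => le_of_lt (mfun_pos hr u))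
  rwa [Finset.sum_insert (by simpa using hza.symm), Finset.sum_singleton] at this

lemma sVal_le_two {G : SimpleGraph (Fin n)} (hT : G.IsTree) {e : Sym2 (Fin n)}
    (he : e ∈ G.edgeSet) (r : Fin n → ℝ) (hr : ∀ u, 0 < r u)
    {z : Fin n} (hz : G.Adj e.out.2 z) (hne : z ≠ e.out.1) :
    sVal G r e ≤ nuVal r - mfun r e.out.2 - mfun r z := by
  have hzb : z ≠ e.out.2 := fun hc => G.irrefl (hc ▸ hz)
  have hsub : sideF G e ⊆ (Finset.univ.erase e.out.2).erase z := by
    intro u hu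
    rw [Finset.mem_erase, Finset.mem_erase]
    refine ⟨fun hc => neighbor_not_in_sideF hT he hz hne (hc ▸ hu),
      fun hc => not_mem_sideF_snd hT he (hc ▸ hu), Finset.mem_univ u⟩
  have h1 : sVal G r e ≤ ∑ u ∈ (Finset.univ.erase e.out.2).erase z, mfun r u :=
    Finset.sum_le_sum_of_subset_of_nonneg hsub (fun u _ _ => le_of_lt (mfun_pos hr u))
  rwa [Finset.sum_erase_eq_sub (Finset.mem_erase.mpr ⟨hzb, Finset.mem_univ _⟩),
    Finset.sum_erase_eq_sub (Finset.mem_univ _)] at h1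

lemma reachable_isolated {H : SimpleGraph (Fin n)} {a : Fin n}
    (hiso : ∀ z, ¬ H.Adj a z) {u : Fin n} (h : H.Reachable a u) : u = a := by
  obtain ⟨p⟩ := h
  cases p with
  | nil => rfl
  | cons h' p => exact absurd h' (hiso _)

lemma no_deleted_adj_of_leaf {G : SimpleGraph (Fin n)} {e : Sym2 (Fin n)} {a b : Fin n}
    (hab : s(a, b) = e) (hleaf : ∀ z, G.Adj a z → z = b) (z : Fin n) :
    ¬ (G.deleteEdges {e}).Adj a z := by
  intro hc
  rw [SimpleGraph.deleteEdges_adj] at hc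
  have hz : z = b := hleaf z hc.1
  exact hc.2 (by simp [hz, hab])

lemma sideF_leaf_fst {G : SimpleGraph (Fin n)} {e : Sym2 (Fin n)}
    (hleaf : ∀ z, G.Adj e.out.1 z → z = e.out.2) : sideF G e = {e.out.1} := by
  ext u
  rw [sideF, Finset.mem_filter, Finset.mem_singleton]
  constructor
  · rintro ⟨-, hs⟩
    exact (reachable_isolated (no_deleted_adj_of_leaf (mk_out e) hleaf) hs).symm ▸ rfl
  · rintro rfl
    exact ⟨Finset.mem_univ _, sideP_fst G e⟩

lemma sideF_leaf_snd {G : SimpleGraph (Fin n)} (hT : G.IsTree) {e : Sym2 (Fin n)}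
    (he : e ∈ G.edgeSet) (hleaf : ∀ z, G.Adj e.out.2 z → z = e.out.1) :
    sideF G e = Finset.univ.erase e.out.2 := by
  have hmk : s(e.out.2, e.out.1) = e := by rw [Sym2.eq_swap, mk_out]
  ext u
  rw [sideF, Finset.mem_filter, Finset.mem_erase]
  constructor
  · rintro ⟨-, hs⟩
    exact ⟨fun hc => not_sideP_snd hT.IsAcyclic he (hc ▸ hs), Finset.mem_univ u⟩
  · rintro ⟨hne, -⟩
    refine ⟨Finset.mem_univ _, ?_⟩
    by_contra hc
    have hreach := (not_sideP_iff hT he u).mp hc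
    exact hne (reachable_isolated (no_deleted_adj_of_leaf hmk hleaf) hreach)

lemma sVal_leaf_fst {G : SimpleGraph (Fin n)} (r : Fin n → ℝ) {e : Sym2 (Fin n)}
    (hleaf : ∀ z, G.Adj e.out.1 z → z = e.out.2) : sVal G r e = mfun r e.out.1 := by
  rw [sVal, sideF_leaf_fst hleaf, Finset.sum_singleton]

lemma sVal_leaf_snd {G : SimpleGraph (Fin n)} (hT : G.IsTree) {e : Sym2 (Fin n)}
    (he : e ∈ G.edgeSet) (r : Fin n → ℝ)
    (hleaf : ∀ z, G.Adj e.out.2 z → z = e.out.1) :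
    sVal G r e = nuVal r - mfun r e.out.2 := by
  rw [sVal, sideF_leaf_snd hT he hleaf,
    Finset.sum_erase_eq_sub (Finset.mem_univ _), nuVal]

lemma ew_le_deg_fst (T : WGraph n) (e : Sym2 (Fin n)) : T.ew e ≤ T.deg e.out.1 := by
  rw [ew_out, WGraph.deg]
  exact Finset.single_le_sum (fun v _ => w_nonneg T e.out.1 v) (Finset.mem_univ _)

lemma ew_le_deg_snd (T : WGraph n) (e : Sym2 (Fin n)) : T.ew e ≤ T.deg e.out.2 := by
  rw [ew_out, T.symm, WGraph.deg]
  exact Finset.single_le_sum (fun v _ => w_nonneg T e.out.2 v) (Finset.mem_univ _)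

lemma deg_leaf_fst (T : WGraph n) {e : Sym2 (Fin n)}
    (hleaf : ∀ z, T.G.Adj e.out.1 z → z = e.out.2) : T.deg e.out.1 = T.ew e := by
  rw [WGraph.deg, ew_out]
  apply Finset.sum_eq_single e.out.2
  · intro v _ hv
    by_cases h : T.G.Adj e.out.1 v
    · exact absurd (hleaf v h) hv
    · exact T.zero _ _ h
  · intro h; exact absurd (Finset.mem_univ _) h

lemma deg_leaf_snd (T : WGraph n) {e : Sym2 (Fin n)}
    (hleaf : ∀ z, T.G.Adj e.out.2 z → z = e.out.1) : T.deg e.out.2 = T.ew e := by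
  rw [WGraph.deg, ew_out, T.symm]
  apply Finset.sum_eq_single e.out.1
  · intro v _ hv
    by_cases h : T.G.Adj e.out.2 v
    · exact absurd (hleaf v h) hv
    · exact T.zero _ _ h
  · intro h; exact absurd (Finset.mem_univ _) h

lemma vol_eq_sum (T : WGraph n) : T.vol = ∑ e ∈ T.G.edgeFinset, 2 * T.ew e := by
  rw [WGraph.vol]
  have h1 : ∀ u : Fin n, T.deg u = ∑ e ∈ T.G.edgeFinset, (if u ∈ e then T.ew e else 0) :=
    fun u => (sum_edge_inc T u).symm
  rw [Finset.sum_congr rfl (fun u _ => h1 u), Finset.sum_comm]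
  apply Finset.sum_congr rfl
  intro e he
  have hab : e.out.1 ≠ e.out.2 := (adj_out (SimpleGraph.mem_edgeFinset.mp he)).ne
  have hpair : Finset.univ.filter (fun u => u ∈ e) = {e.out.1, e.out.2} := by
    ext u
    simp [mem_out_iff]
  rw [Finset.sum_ite, Finset.sum_const_zero, add_zero, Finset.sum_const, hpair,
    Finset.card_pair hab, nsmul_eq_mul]
  norm_num

lemma sum_over_edges_eq (T S : WGraph n) (h : T.edgeWeights = S.edgeWeights) (f : ℝ → ℝ) :
    ∑ e ∈ T.G.edgeFinset, f (T.ew e) = ∑ e ∈ S.G.edgeFinset, f (S.ew e) := by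
  have key : ∀ (U : WGraph n), ∑ e ∈ U.G.edgeFinset, f (U.ew e)
      = (U.edgeWeights.map f).sum := by
    intro U
    rw [WGraph.edgeWeights, Multiset.map_map]
    rfl
  rw [key T, key S, h]

lemma quad_le {t x ν ω : ℝ} (hω : 0 < ω) (hν : 0 < ν) (ht : 0 < t)
    (h1 : t ≤ x) (h2 : t ≤ ν - x) :
    t * (ν - t) / (ν * ω) ≤ x * (ν - x) / (ν * ω) := by
  have hd : (0:ℝ) < ν * ω := by positivity
  have h3 : t * (ν - t) ≤ x * (ν - x) := by nlinarith [mul_nonneg (sub_nonneg.mpr h1) (by linarith : (0:ℝ) ≤ ν - t - x)]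
  exact (div_le_div_iff_of_pos_right hd).mpr h3

lemma quad_lt {t x ν ω : ℝ} (hω : 0 < ω) (hν : 0 < ν) (ht : 0 < t)
    (h1 : t < x) (h2 : t < ν - x) :
    t * (ν - t) / (ν * ω) < x * (ν - x) / (ν * ω) := by
  have hd : (0:ℝ) < ν * ω := by positivity
  have h3 : t * (ν - t) < x * (ν - x) := by nlinarith [mul_pos (sub_pos.mpr h1) (by linarith : (0:ℝ) < ν - t - x)]
  exact (div_lt_div_iff_of_pos_right hd).mpr h3


/-! ### Star graphs and internal edges -/

lemma starGraph_adj {n : ℕ} (u v : Fin n) :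
    (starGraph n).Adj u v ↔ u ≠ v ∧ (u.val = 0 ∨ v.val = 0) := by
  rw [starGraph, SimpleGraph.fromRel_adj]

lemma star_edge_leaf {G : SimpleGraph (Fin n)} (f : G ≃g starGraph n) {e : Sym2 (Fin n)}
    (he : e ∈ G.edgeSet) :
    (∀ z, G.Adj e.out.1 z → z = e.out.2) ∨ (∀ z, G.Adj e.out.2 z → z = e.out.1) := by
  have hadj := adj_out he
  have hstar := f.map_adj_iff.mpr hadj
  rw [starGraph_adj] at hstar
  have hfne := hstar.1
  rcases hstar.2 with h0 | h0
  · right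
    intro z hz
    have hz' := f.map_adj_iff.mpr hz
    rw [starGraph_adj] at hz'
    rcases hz'.2 with h1 | h1
    · exact absurd (Fin.ext (h1.trans h0.symm) : f e.out.2 = f e.out.1).symm hfne
    · exact f.toEquiv.injective (Fin.ext (h1.trans h0.symm))
  · left
    intro z hz
    have hz' := f.map_adj_iff.mpr hz
    rw [starGraph_adj] at hz'
    rcases hz'.2 with h1 | h1
    · exact absurd (Fin.ext (h1.trans h0.symm) : f e.out.1 = f e.out.2) hfne
    · exact f.toEquiv.injective (Fin.ext (h1.trans h0.symm))

lemma exists_two_neighbors {G : SimpleGraph (Fin n)} (hT : G.IsTree) (hn : 3 ≤ n) :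
    ∃ c z1 z2, G.Adj c z1 ∧ G.Adj c z2 ∧ z1 ≠ z2 := by
  by_contra h
  push_neg at h
  have hdeg : ∀ u : Fin n, G.degree u ≤ 1 := by
    intro u
    by_contra hd
    push_neg at hd
    obtain ⟨z1, hz1, z2, hz2, hne⟩ := Finset.one_lt_card.mp hd
    exact hne (h u z1 z2 ((G.mem_neighborFinset u z1).mp hz1)
      ((G.mem_neighborFinset u z2).mp hz2))
  have hsum := G.sum_degrees_eq_twice_card_edges
  have hcard : G.edgeFinset.card = n - 1 := by
    have hcc := hT.card_edgeFinset
    rw [Fintype.card_fin] at hcc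
    omega
  have hle : ∑ v : Fin n, G.degree v ≤ n := by
    calc ∑ v : Fin n, G.degree v ≤ ∑ _v : Fin n, 1 := Finset.sum_le_sum (fun v _ => hdeg v)
    _ = n := by simp
  rw [hsum, hcard] at hle
  omega

lemma hedge_of_no_internal {G : SimpleGraph (Fin n)}
    (h : ∀ e ∈ G.edgeFinset, ¬((∃ z, G.Adj e.out.1 z ∧ z ≠ e.out.2)
      ∧ (∃ z, G.Adj e.out.2 z ∧ z ≠ e.out.1))) :
    ∀ u v, G.Adj u v → (∀ z, G.Adj u z → z = v) ∨ (∀ z, G.Adj v z → z = u) := by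
  intro u v huv
  have he : s(u,v) ∈ G.edgeFinset :=
    SimpleGraph.mem_edgeFinset.mpr ((G.mem_edgeSet).mpr huv)
  have h2 := h _ he
  rcases Sym2.eq_iff.mp (mk_out s(u,v)) with ⟨h1', h2'⟩ | ⟨h1', h2'⟩
  · rw [h1', h2'] at h2
    by_cases hA : ∃ z, G.Adj u z ∧ z ≠ v
    · right; intro z hz; by_contra hzz; exact h2 ⟨hA, ⟨z, hz, hzz⟩⟩
    · left; intro z hz; by_contra hzz; exact hA ⟨z, hz, hzz⟩
  · rw [h1', h2'] at h2
    by_cases hA : ∃ z, G.Adj u z ∧ z ≠ v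
    · right; intro z hz; by_contra hzz; exact h2 ⟨⟨z, hz, hzz⟩, hA⟩
    · left; intro z hz; by_contra hzz; exact hA ⟨z, hz, hzz⟩

lemma star_of_all_pendant {G : SimpleGraph (Fin n)} (hT : G.IsTree) (hn : 3 ≤ n)
    (hedge : ∀ u v, G.Adj u v → (∀ z, G.Adj u z → z = v) ∨ (∀ z, G.Adj v z → z = u)) :
    Nonempty (G ≃g starGraph n) := by
  obtain ⟨c, z1, z2, hcz1, hcz2, hz12⟩ := exists_two_neighbors hT hn
  have hcadj : ∀ v, v ≠ c → G.Adj c v := by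
    intro v hv
    have claim : ∀ (x u : Fin n) (p : G.Walk x u), (x = c ∨ G.Adj c x) → (u = c ∨ G.Adj c u) := by
      intro x u p
      induction p with
      | nil => exact id
      | cons h p ih =>
        rename_i xx yy zz
        intro hx
        apply ih
        rcases hx with rfl | hx
        · exact Or.inr h
        · rcases hedge _ _ hx with h1 | h1
          · exact absurd ((h1 z1 hcz1).trans (h1 z2 hcz2).symm) hz12
          · exact Or.inl (h1 _ h)
    obtain ⟨p⟩ := hT.isConnected.preconnected c v
    rcases claim c v p (Or.inl rfl) with h | h
    · exact absurd h hv
    · exact h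
  have hc2 : ∀ u v, G.Adj u v → u = c ∨ v = c := by
    intro u v huv
    by_contra hcc
    push_neg at hcc
    rcases hedge u v huv with h1 | h1
    · exact hcc.2 (h1 c (hcadj u hcc.1).symm).symm
    · exact hcc.1 (h1 c (hcadj v hcc.2).symm).symm
  have hadj_iff : ∀ u v, G.Adj u v ↔ (u ≠ v ∧ (u = c ∨ v = c)) := by
    intro u v
    constructor
    · intro h; exact ⟨h.ne, hc2 u v h⟩
    · rintro ⟨hne, rfl | rfl⟩
      · exact hcadj v (Ne.symm hne)
      · exact (hcadj u hne).symm
  have h0 : 0 < n := by omega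
  refine ⟨⟨Equiv.swap c ⟨0, h0⟩, ?_⟩⟩
  intro a b
  rw [starGraph_adj, hadj_iff]
  have hv : ∀ x : Fin n, (Equiv.swap c ⟨0, h0⟩ x).val = 0 ↔ x = c := by
    intro x
    constructor
    · intro hx
      have : Equiv.swap c ⟨0, h0⟩ x = ⟨0, h0⟩ := Fin.ext hx
      rw [Equiv.swap_apply_eq_iff, Equiv.swap_apply_right] at this
      exact this
    · rintro rfl
      rw [Equiv.swap_apply_left]
  rw [hv a, hv b]
  simp only [ne_eq, EmbeddingLike.apply_eq_iff_eq]

lemma exists_internal_edge {G : SimpleGraph (Fin n)} (hT : G.IsTree) (hn : 3 ≤ n)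
    (hnstar : ¬ Nonempty (G ≃g starGraph n)) :
    ∃ e ∈ G.edgeFinset, (∃ z, G.Adj e.out.1 z ∧ z ≠ e.out.2)
      ∧ (∃ z, G.Adj e.out.2 z ∧ z ≠ e.out.1) := by
  by_contra h
  push_neg at h
  apply hnstar
  apply star_of_all_pendant hT hn
  apply hedge_of_no_internal
  intro e he hcon
  obtain ⟨z, hz1, hz2⟩ := hcon.2
  exact hz2 (h e he hcon.1 z hz1)


/-! ### Final comparison theorems -/

theorem final_lap {n : ℕ} (hn : 3 ≤ n) (T S : WGraph n) (hT : T.G.IsTree) (hS : S.G.IsTree)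
    (hw : T.edgeWeights = S.edgeWeights) (hstar : Nonempty (S.G ≃g starGraph n))
    (hnstar : ¬ Nonempty (T.G ≃g starGraph n)) :
    sumInvEig S.lap < sumInvEig T.lap := by
  have hn0 : 0 < n := by omega
  have hnR : (3:ℝ) ≤ (n:ℝ) := by exact_mod_cast hn
  have hnRpos : (0:ℝ) < (n:ℝ) := by linarith
  have hr : ∀ u : Fin n, (0:ℝ) < (fun _ : Fin n => (1:ℝ)) u := fun _ => one_pos
  have hfeq := sum_over_edges_eq T S hw (fun ω => 1 * ((n:ℝ) - 1) / ((n:ℝ) * ω))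
  have hSle : sumInvEig S.lap
      = ∑ e ∈ S.G.edgeFinset, 1 * ((n:ℝ) - 1) / ((n:ℝ) * S.ew e) := by
    rw [lap_eq_Mmat S, master hS hr hn0]
    simp only [nu_one]
    apply Finset.sum_congr rfl
    intro e he
    have hesS : e ∈ S.G.edgeSet := SimpleGraph.mem_edgeFinset.mp he
    obtain ⟨g⟩ := hstar
    rcases star_edge_leaf g hesS with hleaf | hleaf
    · rw [sVal_leaf_fst _ hleaf]
      simp only [mfun_one]
    · rw [sVal_leaf_snd hS hesS _ hleaf]
      simp only [mfun_one, nu_one]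
      ring
  have hTge : ∑ e ∈ T.G.edgeFinset, 1 * ((n:ℝ) - 1) / ((n:ℝ) * T.ew e)
      < sumInvEig T.lap := by
    rw [lap_eq_Mmat T, master hT hr hn0]
    simp only [nu_one]
    obtain ⟨eint, heint, h1int, h2int⟩ := exists_internal_edge hT hn hnstar
    apply Finset.sum_lt_sum
    · intro e he
      have hew := ew_pos T he
      have hge := sVal_ge_fst (G := T.G) _ hr e
      have hle' := sVal_le hT (SimpleGraph.mem_edgeFinset.mp he) _ hr
      simp only [mfun_one, nu_one] at hge hle'
      exact quad_le hew hnRpos one_pos hge (by linarith)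
    · refine ⟨eint, heint, ?_⟩
      obtain ⟨z1, hz1, hz1b⟩ := h1int
      obtain ⟨z2, hz2, hz2a⟩ := h2int
      have hg2 := sVal_ge_two (G := T.G) _ hr hz1 hz1b
      have hl2 := sVal_le_two hT (SimpleGraph.mem_edgeFinset.mp heint) _ hr hz2 hz2a
      simp only [mfun_one, nu_one] at hg2 hl2
      exact quad_lt (ew_pos T heint) hnRpos one_pos (by linarith) (by linarith)
  rw [hSle, ← hfeq]
  exact hTge

theorem final_nlap {n : ℕ} (hn : 3 ≤ n) (T S : WGraph n) (hT : T.G.IsTree) (hS : S.G.IsTree)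
    (hw : T.edgeWeights = S.edgeWeights) (hstar : Nonempty (S.G ≃g starGraph n))
    (hnstar : ¬ Nonempty (T.G ≃g starGraph n)) :
    sumInvEig S.nlap < sumInvEig T.nlap := by
  have hn0 : 0 < n := by omega
  have hdT : ∀ u, 0 < T.deg u := deg_pos hT (by omega)
  have hdS : ∀ u, 0 < S.deg u := deg_pos hS (by omega)
  have hrT : ∀ u : Fin n, (0:ℝ) < (fun u => (Real.sqrt (T.deg u))⁻¹) u :=
    fun u => inv_pos.mpr (Real.sqrt_pos.mpr (hdT u))
  have hrS : ∀ u : Fin n, (0:ℝ) < (fun u => (Real.sqrt (S.deg u))⁻¹) u :=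
    fun u => inv_pos.mpr (Real.sqrt_pos.mpr (hdS u))
  have hvol : S.vol = T.vol := by
    have h2 := sum_over_edges_eq T S hw (fun ω => 2 * ω)
    rw [vol_eq_sum S, vol_eq_sum T, h2]
  have hvolpos : 0 < T.vol := by
    have : Nonempty (Fin n) := Fin.pos_iff_nonempty.mp hn0
    exact Finset.sum_pos (fun u _ => hdT u) Finset.univ_nonempty
  have hfeq := sum_over_edges_eq T S hw (fun ω => ω * (T.vol - ω) / (T.vol * ω))
  have hSle : sumInvEig S.nlap
      = ∑ e ∈ S.G.edgeFinset, S.ew e * (T.vol - S.ew e) / (T.vol * S.ew e) := by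
    rw [nlap_eq_Mmat S, master hS hrS hn0]
    simp only [nu_sqrtdeg hdS, hvol]
    apply Finset.sum_congr rfl
    intro e he
    have hesS : e ∈ S.G.edgeSet := SimpleGraph.mem_edgeFinset.mp he
    obtain ⟨g⟩ := hstar
    rcases star_edge_leaf g hesS with hleaf | hleaf
    · rw [sVal_leaf_fst _ hleaf]
      simp only [mfun_sqrtdeg hdS]
      rw [deg_leaf_fst S hleaf]
    · rw [sVal_leaf_snd hS hesS _ hleaf]
      simp only [mfun_sqrtdeg hdS, nu_sqrtdeg hdS, hvol]
      rw [deg_leaf_snd S hleaf]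
      ring
  have hTge : ∑ e ∈ T.G.edgeFinset, T.ew e * (T.vol - T.ew e) / (T.vol * T.ew e)
      < sumInvEig T.nlap := by
    rw [nlap_eq_Mmat T, master hT hrT hn0]
    simp only [nu_sqrtdeg hdT]
    obtain ⟨eint, heint, h1int, h2int⟩ := exists_internal_edge hT hn hnstar
    apply Finset.sum_lt_sum
    · intro e he
      have hew := ew_pos T he
      have hge := sVal_ge_fst (G := T.G) _ hrT e
      have hle' := sVal_le hT (SimpleGraph.mem_edgeFinset.mp he) _ hrT
      simp only [mfun_sqrtdeg hdT, nu_sqrtdeg hdT] at hge hle'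
      have hge' : T.ew e ≤ sVal T.G (fun u => (Real.sqrt (T.deg u))⁻¹) e :=
        le_trans (ew_le_deg_fst T e) hge
      have hle'' : T.ew e ≤ T.vol - sVal T.G (fun u => (Real.sqrt (T.deg u))⁻¹) e := by
        have := ew_le_deg_snd T e
        linarith
      exact quad_le hew hvolpos hew hge' hle''
    · refine ⟨eint, heint, ?_⟩
      have hew := ew_pos T heint
      obtain ⟨z1, hz1, hz1b⟩ := h1int
      obtain ⟨z2, hz2, hz2a⟩ := h2int
      have hg2 := sVal_ge_two (G := T.G) _ hrT hz1 hz1b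
      have hl2 := sVal_le_two hT (SimpleGraph.mem_edgeFinset.mp heint) _ hrT hz2 hz2a
      simp only [mfun_sqrtdeg hdT, nu_sqrtdeg hdT] at hg2 hl2
      have hq1 : T.ew eint < sVal T.G (fun u => (Real.sqrt (T.deg u))⁻¹) eint := by
        have := ew_le_deg_fst T eint
        have := hdT z1
        linarith
      have hq2 : T.ew eint < T.vol - sVal T.G (fun u => (Real.sqrt (T.deg u))⁻¹) eint := by
        have := ew_le_deg_snd T eint
        have := hdT z2
        linarith
      exact quad_lt hew hvolpos hew hq1 hq2
  rw [hSle, ← hfeq]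
  exact hTge


end StarAux

end StarAuxProofs

theorem stmt18 (W : Multiset ℝ) (hW : ∀ x ∈ W, 0 < x) (hcard : 2 ≤ Multiset.card W) {n : ℕ}
    (T S : WGraph n) (hT : T.G.IsTree) (hS : S.G.IsTree)
    (hwT : T.edgeWeights = W) (hwS : S.edgeWeights = W)
    (hstar : Nonempty (S.G ≃g starGraph n)) (hnstar : ¬ Nonempty (T.G ≃g starGraph n)) :
    sumInvEig S.lap < sumInvEig T.lap ∧ sumInvEig S.nlap < sumInvEig T.nlap := by
  have h1 : Multiset.card W = T.G.edgeFinset.card := by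
    rw [← hwT, WGraph.edgeWeights, Multiset.card_map]
    rfl
  have h2 := hT.card_edgeFinset
  rw [Fintype.card_fin] at h2
  have hn3 : 3 ≤ n := by omega
  have hw' : T.edgeWeights = S.edgeWeights := hwT.trans hwS.symm
  exact ⟨StarAux.final_lap hn3 T S hT hS hw' hstar hnstar,
         StarAux.final_nlap hn3 T S hT hS hw' hstar hnstar⟩
end
end
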